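/- arXiv:2403.07183 — 2 statements merged into one kernel-verified Lean document; each statement's English description precedes it below -/
import Mathlib

section
/- (Lemma 2 of the paper.) Let X be a measurable space, μ a probability measure on X, and P, Q : X → ℝ measurable with P(x) > 0, Q(x) > 0 and max{|log P(x)|, |log Q(x)|} ≤ c for all x ∈ X, where c > 0. Let x₁, …, xₙ be i.i.d. random variables with law μ, let α* be a maximizer of the population log-likelihood L over [0,1], and let α̂ be a maximizer of the empirical log-likelihood L̂ₙ over [0,1]. Then for every ε ∈ (0,1), with probability at least 1−ε, |L(α*) − L(α̂)| ≤ 2·√(2c²·log(2/ε)/n). -/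
open MeasureTheory ProbabilityTheory Real

private lemma hoeffding_scalar {p : ℝ} (hp0 : 0 ≤ p) (hp1 : p ≤ 1) (h : ℝ) :
    Real.log (1 - p + p * Real.exp h) ≤ p * h + h ^ 2 / 8 := by
  have hD : ∀ u : ℝ, 0 < 1 - p + p * Real.exp u := by
    intro u
    rcases eq_or_lt_of_le hp1 with h1 | h1
    · rw [h1]; simpa using Real.exp_pos u
    · have := mul_nonneg hp0 (Real.exp_pos u).le
      nlinarith
  set F : ℝ → ℝ := fun u => Real.log (1 - p + p * Real.exp u) - p * u - u ^ 2 / 8 with hFdef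
  set F' : ℝ → ℝ := fun u => p * Real.exp u / (1 - p + p * Real.exp u) - p - u / 4 with hF'def
  have hderiv : ∀ u, HasDerivAt F (F' u) u := by
    intro u
    have h1 : HasDerivAt (fun u : ℝ => 1 - p + p * Real.exp u) (p * Real.exp u) u := by
      simpa using ((Real.hasDerivAt_exp u).const_mul p).const_add (1 - p)
    have h2 := h1.log (hD u).ne'
    have h3 : HasDerivAt (fun u : ℝ => p * u) p u := by
      simpa using (hasDerivAt_id u).const_mul p
    have h4 : HasDerivAt (fun u : ℝ => u ^ 2 / 8) (u / 4) u := by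
      have := (hasDerivAt_pow 2 u).div_const 8
      simpa using this.congr_deriv (by ring)
    exact (h2.sub h3).sub h4
  have hderiv2 : ∀ u, HasDerivAt F'
      (p * Real.exp u * (1 - p) / (1 - p + p * Real.exp u) ^ 2 - 1 / 4) u := by
    intro u
    have h1 : HasDerivAt (fun u : ℝ => 1 - p + p * Real.exp u) (p * Real.exp u) u := by
      simpa using ((Real.hasDerivAt_exp u).const_mul p).const_add (1 - p)
    have h0 : HasDerivAt (fun u : ℝ => p * Real.exp u) (p * Real.exp u) u :=
      (Real.hasDerivAt_exp u).const_mul p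
    have h2 := h0.div h1 (hD u).ne'
    have h3 : HasDerivAt (fun u : ℝ => p + u / 4) (1 / 4) u := by
      simpa using ((hasDerivAt_id u).div_const 4).const_add p
    have h4 := h2.sub h3
    have : (p * Real.exp u * (1 - p + p * Real.exp u) - p * Real.exp u * (p * Real.exp u)) /
        (1 - p + p * Real.exp u) ^ 2 - 1 / 4
        = p * Real.exp u * (1 - p) / (1 - p + p * Real.exp u) ^ 2 - 1 / 4 := by
      ring_nf
    rw [this] at h4
    have hfun : F' = (((fun u : ℝ => p * Real.exp u) / fun u : ℝ => 1 - p + p * Real.exp u)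
        - fun u : ℝ => p + u / 4) := by
      funext u; simp only [hF'def, Pi.sub_apply, Pi.div_apply]; ring
    rw [hfun]; exact h4
  have hF'' : ∀ u, p * Real.exp u * (1 - p) / (1 - p + p * Real.exp u) ^ 2 - 1 / 4 ≤ 0 := by
    intro u
    have hpos : (0:ℝ) < (1 - p + p * Real.exp u) ^ 2 := pow_pos (hD u) 2
    rw [sub_nonpos, div_le_iff₀ hpos]
    nlinarith [sq_nonneg ((1 - p) - p * Real.exp u)]
  have hF'0 : F' 0 = 0 := by simp [hF'def]
  have hF'anti : Antitone F' := by
    have hdiff : Differentiable ℝ F' := fun u => (hderiv2 u).differentiableAt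
    apply antitone_of_deriv_nonpos hdiff
    intro u
    rw [(hderiv2 u).deriv]
    exact hF'' u
  have hF0 : F 0 = 0 := by simp [hFdef]
  have key : F h ≤ 0 := by
    rcases le_total h 0 with hh | hh
    · have hmono : MonotoneOn F (Set.Iic (0:ℝ)) := by
        apply monotoneOn_of_deriv_nonneg (convex_Iic 0)
          (fun u _ => ((hderiv u).differentiableAt.continuousAt).continuousWithinAt)
          (fun u hu => ((hderiv u).differentiableAt.differentiableWithinAt))
        intro u hu
        rw [(hderiv u).deriv]
        rw [interior_Iic] at hu
        have := hF'anti (le_of_lt hu)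
        rw [hF'0] at this
        linarith
      have := hmono (Set.mem_Iic.2 hh) (Set.mem_Iic.2 le_rfl) hh
      rw [hF0] at this; exact this
    · have hmono : AntitoneOn F (Set.Ici (0:ℝ)) := by
        apply antitoneOn_of_deriv_nonpos (convex_Ici 0)
          (fun u _ => ((hderiv u).differentiableAt.continuousAt).continuousWithinAt)
          (fun u hu => ((hderiv u).differentiableAt.differentiableWithinAt))
        intro u hu
        rw [(hderiv u).deriv]
        rw [interior_Ici] at hu
        have := hF'anti (le_of_lt hu)
        rw [hF'0] at this
        linarith
      have := hmono (Set.mem_Ici.2 le_rfl) (Set.mem_Ici.2 hh) hh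
      rw [hF0] at this; exact this
  simp only [hFdef] at key
  linarith

private lemma mgf_bound {X : Type*} [MeasurableSpace X] {μ : Measure X} [IsProbabilityMeasure μ]
    {g : X → ℝ} (hg : Measurable g) {a b lam : ℝ}
    (hga : ∀ x, a ≤ g x) (hgb : ∀ x, g x ≤ b) :
    ∫ x, Real.exp (lam * g x) ∂μ ≤
      Real.exp (lam * (∫ x, g x ∂μ) + lam ^ 2 * (b - a) ^ 2 / 8) := by
  have hX : Nonempty X := by
    by_contra hempty
    rw [not_nonempty_iff] at hempty
    have h1 : μ Set.univ = 1 := measure_univ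
    rw [Set.univ_eq_empty_iff.2 hempty] at h1
    simp at h1
  obtain ⟨x0⟩ := hX
  have hab : a ≤ b := (hga x0).trans (hgb x0)
  have hgabs : ∀ x, |g x| ≤ max |a| |b| := by
    intro x
    rw [abs_le]
    constructor
    · have h1 := neg_abs_le a; have h2 := le_max_left |a| |b|; linarith [hga x]
    · have h1 := le_abs_self b; have h2 := le_max_right |a| |b|; linarith [hgb x]
  have hgint : Integrable g μ := by
    refine Integrable.mono' (integrable_const (max |a| |b|)) hg.aestronglyMeasurable ?_
    exact Filter.Eventually.of_forall fun x => by rw [Real.norm_eq_abs]; exact hgabs x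
  set m := ∫ x, g x ∂μ with hm
  have ham : a ≤ m := by
    have h1 : ∫ (_ : X), a ∂μ ≤ ∫ x, g x ∂μ := integral_mono (integrable_const a) hgint hga
    simpa using h1
  have hmb : m ≤ b := by
    have h1 : ∫ x, g x ∂μ ≤ ∫ (_ : X), b ∂μ := integral_mono hgint (integrable_const b) hgb
    simpa using h1
  rcases eq_or_lt_of_le hab with heq | hlt
  · have hgx : ∀ x, g x = a := fun x => le_antisymm (heq ▸ hgb x) (hga x)
    have hma : m = a := le_antisymm (heq ▸ hmb) ham
    have hcalc : ∫ x, Real.exp (lam * g x) ∂μ = Real.exp (lam * a) := by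
      simp only [hgx]
      simp
    rw [hcalc, hma, ← heq]
    simp
  · have hba : (0:ℝ) < b - a := sub_pos.2 hlt
    have hpt : ∀ x, Real.exp (lam * g x) ≤
        Real.exp (lam * a) / (b - a) * (b - g x) + Real.exp (lam * b) / (b - a) * (g x - a) := by
      intro x
      have hθ1 : 0 ≤ (b - g x) / (b - a) := div_nonneg (by linarith [hgb x]) hba.le
      have hθ2 : 0 ≤ (g x - a) / (b - a) := div_nonneg (by linarith [hga x]) hba.le
      have hsum : (b - g x) / (b - a) + (g x - a) / (b - a) = 1 := by field_simp; ring
      have hconv := convexOn_exp.2 (Set.mem_univ (lam * a)) (Set.mem_univ (lam * b)) hθ1 hθ2 hsum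
      have harg : ((b - g x) / (b - a)) • (lam * a) + ((g x - a) / (b - a)) • (lam * b)
          = lam * g x := by
        simp only [smul_eq_mul]
        field_simp
        ring
      rw [harg] at hconv
      calc Real.exp (lam * g x)
          ≤ (b - g x) / (b - a) * Real.exp (lam * a)
            + (g x - a) / (b - a) * Real.exp (lam * b) := by
            simpa [smul_eq_mul] using hconv
        _ = Real.exp (lam * a) / (b - a) * (b - g x)
            + Real.exp (lam * b) / (b - a) * (g x - a) := by ring
    have hint1 : Integrable (fun x => Real.exp (lam * a) / (b - a) * (b - g x)
        + Real.exp (lam * b) / (b - a) * (g x - a)) μ :=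
      (((integrable_const b).sub hgint).const_mul _).add
        ((hgint.sub (integrable_const a)).const_mul _)
    have hintexp : Integrable (fun x => Real.exp (lam * g x)) μ := by
      refine Integrable.mono' (integrable_const (Real.exp (|lam| * max |a| |b|)))
        ((hg.const_mul lam).exp).aestronglyMeasurable ?_
      refine Filter.Eventually.of_forall fun x => ?_
      rw [Real.norm_eq_abs, abs_of_pos (Real.exp_pos _)]
      apply Real.exp_le_exp.2
      calc lam * g x ≤ |lam * g x| := le_abs_self _
        _ = |lam| * |g x| := abs_mul _ _
        _ ≤ |lam| * max |a| |b| :=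
            mul_le_mul_of_nonneg_left (hgabs x) (abs_nonneg lam)
    have hint2 : Integrable (fun x => Real.exp (lam * a) / (b - a) * (b - g x)) μ := by
      have := ((integrable_const b).sub hgint).const_mul (Real.exp (lam * a) / (b - a))
      simpa using this
    have hint3 : Integrable (fun x => Real.exp (lam * b) / (b - a) * (g x - a)) μ := by
      have := (hgint.sub (integrable_const a)).const_mul (Real.exp (lam * b) / (b - a))
      simpa using this
    have hILE : ∫ x, Real.exp (lam * g x) ∂μ ≤
        Real.exp (lam * a) / (b - a) * (b - m) + Real.exp (lam * b) / (b - a) * (m - a) := by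
      calc ∫ x, Real.exp (lam * g x) ∂μ
          ≤ ∫ x, (Real.exp (lam * a) / (b - a) * (b - g x)
              + Real.exp (lam * b) / (b - a) * (g x - a)) ∂μ :=
            integral_mono hintexp hint1 hpt
        _ = Real.exp (lam * a) / (b - a) * (b - m)
            + Real.exp (lam * b) / (b - a) * (m - a) := by
            rw [integral_add hint2 hint3, integral_const_mul, integral_const_mul,
              integral_sub (integrable_const b) hgint,
              integral_sub hgint (integrable_const a)]
            simp [hm]
    set p := (m - a) / (b - a) with hp
    have hp0 : 0 ≤ p := div_nonneg (by linarith) hba.le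
    have hp1 : p ≤ 1 := by rw [hp, div_le_one hba]; linarith
    have hDpos : 0 < 1 - p + p * Real.exp (lam * (b - a)) := by
      rcases eq_or_lt_of_le hp0 with hp' | hp'
      · rw [← hp']; norm_num
      · have h1 := mul_pos hp' (Real.exp_pos (lam * (b - a)))
        nlinarith
    have hkey := hoeffding_scalar hp0 hp1 (lam * (b - a))
    have hident : Real.exp (lam * a) / (b - a) * (b - m) + Real.exp (lam * b) / (b - a) * (m - a)
        = Real.exp (lam * a) * (1 - p + p * Real.exp (lam * (b - a))) := by
      have hexpb : Real.exp (lam * b) = Real.exp (lam * a) * Real.exp (lam * (b - a)) := by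
        rw [← Real.exp_add]; ring_nf
      rw [hexpb, hp]
      field_simp
      ring
    calc ∫ x, Real.exp (lam * g x) ∂μ
        ≤ Real.exp (lam * a) * (1 - p + p * Real.exp (lam * (b - a))) := hILE.trans_eq hident
      _ = Real.exp (lam * a + Real.log (1 - p + p * Real.exp (lam * (b - a)))) := by
          rw [Real.exp_add, Real.exp_log hDpos]
      _ ≤ Real.exp (lam * a + (p * (lam * (b - a)) + (lam * (b - a)) ^ 2 / 8)) := by
          apply Real.exp_le_exp.2; linarith
      _ = Real.exp (lam * m + lam ^ 2 * (b - a) ^ 2 / 8) := by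
          congr 1
          have hpb : p * (lam * (b - a)) = lam * (m - a) := by
            rw [hp]; field_simp
          rw [hpb]; ring

private lemma chernoff_iid {X : Type*} [MeasurableSpace X] {μ : Measure X} [IsProbabilityMeasure μ]
    {Ω : Type*} [MeasureSpace Ω] [IsProbabilityMeasure (ℙ : Measure Ω)]
    {n : ℕ} {x : Fin n → Ω → X} (hxm : ∀ i, Measurable (x i))
    (hindep : iIndepFun x ℙ)
    (hlaw : ∀ i, Measure.map (x i) ℙ = μ)
    {g : X → ℝ} (hg : Measurable g) {c t : ℝ} (hc : 0 < c) (ht : 0 < t)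
    (hgb : ∀ y, |g y| ≤ 2 * c) (hmean : (∫ y, g y ∂μ) = -(2 * t)) :
    (ℙ {ω | 0 ≤ ∑ i, g (x i ω)}).toReal ≤ Real.exp (-((n : ℝ) * t ^ 2 / (2 * c ^ 2))) := by
  set lam := t / (2 * c ^ 2) with hlam
  have hlampos : 0 < lam := by positivity
  set Y : Fin n → Ω → ℝ := fun i => g ∘ x i with hY
  have hYm : ∀ i, Measurable (Y i) := fun i => hg.comp (hxm i)
  have hindep' : iIndepFun Y ℙ :=
    hindep.comp (fun _ => g) (fun _ => hg)
  have hYint : ∀ i, Integrable (fun ω => Real.exp (lam * Y i ω)) ℙ := by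
    intro i
    refine Integrable.mono' (integrable_const (Real.exp (lam * (2 * c))))
      (((hYm i).const_mul lam).exp).aestronglyMeasurable ?_
    refine Filter.Eventually.of_forall fun ω => ?_
    rw [Real.norm_eq_abs, abs_of_pos (Real.exp_pos _)]
    apply Real.exp_le_exp.2
    apply mul_le_mul_of_nonneg_left _ hlampos.le
    exact le_trans (le_abs_self _) (hgb (x i ω))
  have hmgf_i : ∀ i, mgf (Y i) ℙ lam ≤ Real.exp (-(t ^ 2 / (2 * c ^ 2))) := by
    intro i
    have h1 : mgf (Y i) ℙ lam = ∫ y, Real.exp (lam * g y) ∂μ := by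
      rw [mgf, ← hlaw i, integral_map (hxm i).aemeasurable]
      · rfl
      · exact ((hg.const_mul lam).exp).aestronglyMeasurable
    rw [h1]
    have h2 := mgf_bound (μ := μ) hg (a := -(2 * c)) (b := 2 * c) (lam := lam)
      (fun y => neg_le_of_abs_le (hgb y)) (fun y => le_of_abs_le (hgb y))
    rw [hmean] at h2
    refine h2.trans (le_of_eq ?_)
    congr 1
    rw [hlam]
    field_simp
    ring
  have hsum_int : Integrable (fun ω => Real.exp (lam * (∑ i, Y i) ω)) ℙ :=
    hindep'.integrable_exp_mul_sum hYm (fun i _ => hYint i)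
  have hset : {ω : Ω | 0 ≤ ∑ i, g (x i ω)} = {ω : Ω | (0:ℝ) ≤ (∑ i, Y i) ω} := by
    ext ω
    simp [hY, Finset.sum_apply]
  rw [hset]
  calc (ℙ {ω : Ω | (0:ℝ) ≤ (∑ i, Y i) ω}).toReal
      ≤ Real.exp (-lam * 0) * mgf (∑ i, Y i) ℙ lam :=
        measure_ge_le_exp_mul_mgf 0 hlampos.le hsum_int
    _ = mgf (∑ i, Y i) ℙ lam := by simp
    _ = ∏ i, mgf (Y i) ℙ lam := hindep'.mgf_sum hYm Finset.univ
    _ ≤ ∏ _i : Fin n, Real.exp (-(t ^ 2 / (2 * c ^ 2))) :=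
        Finset.prod_le_prod (fun i _ => mgf_nonneg) (fun i _ => hmgf_i i)
    _ = Real.exp (-((n : ℝ) * t ^ 2 / (2 * c ^ 2))) := by
        rw [Finset.prod_const, ← Real.exp_nat_mul]
        congr 1
        simp
        ring

set_option maxHeartbeats 1000000 in
/-- Lemma 2 of the paper: with probability at least `1 - ε`, the population
log-likelihood at the empirical maximizer `α̂` is within `2√(2c² log(2/ε)/n)` of its
maximum value at the population maximizer `α*`. -/
theorem population_logLikelihood_gap
    {X : Type*} [MeasurableSpace X] (μ : Measure X) [IsProbabilityMeasure μ]
    (P Q : X → ℝ) (hPm : Measurable P) (hQm : Measurable Q)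
    (hP : ∀ x, 0 < P x) (hQ : ∀ x, 0 < Q x)
    (c : ℝ) (hc : 0 < c)
    (hbound : ∀ x, max |Real.log (P x)| |Real.log (Q x)| ≤ c)
    {Ω : Type*} [MeasureSpace Ω] [IsProbabilityMeasure (ℙ : Measure Ω)]
    (n : ℕ) (hn : 0 < n) (x : Fin n → Ω → X)
    (hxm : ∀ i, Measurable (x i))
    (hindep : iIndepFun x ℙ)
    (hlaw : ∀ i, Measure.map (x i) ℙ = μ)
    (αstar : ℝ) (hαstar : αstar ∈ Set.Icc (0 : ℝ) 1)
    (hαstarMax : ∀ β ∈ Set.Icc (0 : ℝ) 1,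
      (∫ y, Real.log ((1 - β) * P y + β * Q y) ∂μ) ≤
        ∫ y, Real.log ((1 - αstar) * P y + αstar * Q y) ∂μ)
    (αhat : Ω → ℝ) (hαhat : ∀ ω, αhat ω ∈ Set.Icc (0 : ℝ) 1)
    (hαhatMax : ∀ ω, ∀ β ∈ Set.Icc (0 : ℝ) 1,
      (1 / (n : ℝ)) * ∑ i, Real.log ((1 - β) * P (x i ω) + β * Q (x i ω)) ≤
        (1 / (n : ℝ)) *
          ∑ i, Real.log ((1 - αhat ω) * P (x i ω) + αhat ω * Q (x i ω)))
    (ε : ℝ) (hε : ε ∈ Set.Ioo (0 : ℝ) 1) :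
    (ℙ {ω : Ω |
        |(∫ y, Real.log ((1 - αstar) * P y + αstar * Q y) ∂μ) -
          ∫ y, Real.log ((1 - αhat ω) * P y + αhat ω * Q y) ∂μ| ≤
          2 * Real.sqrt (2 * c ^ 2 * Real.log (2 / ε) / (n : ℝ))}).toReal ≥ 1 - ε := by
  obtain ⟨hε0, hε1⟩ := hε
  set t := Real.sqrt (2 * c ^ 2 * Real.log (2 / ε) / (n : ℝ)) with htdef
  have hlogpos : 0 < Real.log (2 / ε) := Real.log_pos (by rw [lt_div_iff₀ hε0]; linarith)
  have hnpos : (0:ℝ) < (n : ℝ) := Nat.cast_pos.2 hn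
  have htpos : 0 < t := Real.sqrt_pos.2 (by positivity)
  have ht2 : t ^ 2 = 2 * c ^ 2 * Real.log (2 / ε) / (n : ℝ) := Real.sq_sqrt (by positivity)
  have hexp : Real.exp (-((n:ℝ) * t ^ 2 / (2 * c ^ 2))) = ε / 2 := by
    rw [ht2]
    have harg : (n:ℝ) * (2 * c ^ 2 * Real.log (2 / ε) / (n : ℝ)) / (2 * c ^ 2)
        = Real.log (2 / ε) := by field_simp
    rw [harg, Real.exp_neg, Real.exp_log (by positivity), inv_div]
  have hmix : ∀ β ∈ Set.Icc (0:ℝ) 1, ∀ y, 0 < (1 - β) * P y + β * Q y := by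
    intro β hβ y
    calc (0:ℝ) < min (P y) (Q y) := lt_min (hP y) (hQ y)
      _ = (1 - β) * min (P y) (Q y) + β * min (P y) (Q y) := by ring
      _ ≤ (1 - β) * P y + β * Q y :=
          add_le_add (mul_le_mul_of_nonneg_left (min_le_left _ _) (by linarith [hβ.2]))
            (mul_le_mul_of_nonneg_left (min_le_right _ _) hβ.1)
  have habs : ∀ β ∈ Set.Icc (0:ℝ) 1, ∀ y, |Real.log ((1 - β) * P y + β * Q y)| ≤ c := by
    intro β hβ y
    have hb := hbound y
    have hmax1 := le_max_left |Real.log (P y)| |Real.log (Q y)|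
    have hmax2 := le_max_right |Real.log (P y)| |Real.log (Q y)|
    have habsP := abs_le.1 (le_trans hmax1 hb : |Real.log (P y)| ≤ c)
    have habsQ := abs_le.1 (le_trans hmax2 hb : |Real.log (Q y)| ≤ c)
    rw [abs_le]
    rcases le_total (P y) (Q y) with hpq | hpq
    · constructor
      · have h1 : P y ≤ (1 - β) * P y + β * Q y := by
          nlinarith [mul_nonneg hβ.1 (sub_nonneg.2 hpq)]
        have h2 := Real.log_le_log (hP y) h1
        linarith [habsP.1]
      · have h1 : (1 - β) * P y + β * Q y ≤ Q y := by
          nlinarith [mul_nonneg (sub_nonneg.2 hβ.2) (sub_nonneg.2 hpq)]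
        have h2 := Real.log_le_log (hmix β hβ y) h1
        linarith [habsQ.2]
    · constructor
      · have h1 : Q y ≤ (1 - β) * P y + β * Q y := by
          nlinarith [mul_nonneg (sub_nonneg.2 hβ.2) (sub_nonneg.2 hpq)]
        have h2 := Real.log_le_log (hQ y) h1
        linarith [habsQ.1]
      · have h1 : (1 - β) * P y + β * Q y ≤ P y := by
          nlinarith [mul_nonneg hβ.1 (sub_nonneg.2 hpq)]
        have h2 := Real.log_le_log (hmix β hβ y) h1
        linarith [habsP.2]
  have hfmeas : ∀ β : ℝ, Measurable (fun y => Real.log ((1 - β) * P y + β * Q y)) :=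
    fun β => ((hPm.const_mul (1 - β)).add (hQm.const_mul β)).log
  have hfint : ∀ β ∈ Set.Icc (0:ℝ) 1,
      Integrable (fun y => Real.log ((1 - β) * P y + β * Q y)) μ := by
    intro β hβ
    refine Integrable.mono' (integrable_const c) (hfmeas β).aestronglyMeasurable ?_
    exact Filter.Eventually.of_forall fun y => by rw [Real.norm_eq_abs]; exact habs β hβ y
  set L : ℝ → ℝ := fun β => ∫ y, Real.log ((1 - β) * P y + β * Q y) ∂μ with hLdef
  set S : ℝ → Ω → ℝ :=
    fun β ω => ∑ i, Real.log ((1 - β) * P (x i ω) + β * Q (x i ω)) with hSdef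
  have hLmax : ∀ β ∈ Set.Icc (0:ℝ) 1, L β ≤ L αstar := hαstarMax
  have hSmax : ∀ ω, ∀ β ∈ Set.Icc (0:ℝ) 1, S β ω ≤ S (αhat ω) ω := by
    intro ω β hβ
    have h1 := hαhatMax ω β hβ
    have h2 : (0:ℝ) < 1 / (n:ℝ) := by positivity
    exact le_of_mul_le_mul_left h1 h2
  have hptconc : ∀ y : X, ConcaveOn ℝ (Set.Icc (0:ℝ) 1)
      (fun β => Real.log ((1 - β) * P y + β * Q y)) := by
    intro y
    refine ⟨convex_Icc 0 1, fun u hu v hv wa wb ha hb hab => ?_⟩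
    have h1 : (1 - (wa • u + wb • v)) * P y + (wa • u + wb • v) * Q y
        = wa • ((1 - u) * P y + u * Q y) + wb • ((1 - v) * P y + v * Q y) := by
      simp only [smul_eq_mul]
      have hw : wb = 1 - wa := by linarith
      rw [hw]; ring
    have h2 := (strictConcaveOn_log_Ioi.concaveOn).2 (Set.mem_Ioi.2 (hmix u hu y))
      (Set.mem_Ioi.2 (hmix v hv y)) ha hb hab
    dsimp only
    rw [h1]
    exact h2
  have hLconc : ConcaveOn ℝ (Set.Icc (0:ℝ) 1) L := by
    refine ⟨convex_Icc 0 1, fun u hu v hv wa wb ha hb hab => ?_⟩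
    have hmem : wa • u + wb • v ∈ Set.Icc (0:ℝ) 1 := (convex_Icc (0:ℝ) 1) hu hv ha hb hab
    simp only [smul_eq_mul]
    have hint1 : Integrable (fun y => wa * Real.log ((1 - u) * P y + u * Q y)
        + wb * Real.log ((1 - v) * P y + v * Q y)) μ :=
      ((hfint u hu).const_mul wa).add ((hfint v hv).const_mul wb)
    have hle : ∀ y, wa * Real.log ((1 - u) * P y + u * Q y)
        + wb * Real.log ((1 - v) * P y + v * Q y)
        ≤ Real.log ((1 - (wa * u + wb * v)) * P y + (wa * u + wb * v) * Q y) := by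
      intro y
      have h2 := (hptconc y).2 hu hv ha hb hab
      simpa [smul_eq_mul] using h2
    have hmono := integral_mono hint1 (hfint _ hmem) hle
    rw [integral_add ((hfint u hu).const_mul wa) ((hfint v hv).const_mul wb),
      integral_const_mul, integral_const_mul] at hmono
    exact hmono
  have hSconc : ∀ ω, ConcaveOn ℝ (Set.Icc (0:ℝ) 1) (fun β => S β ω) := by
    intro ω
    refine ⟨convex_Icc 0 1, fun u hu v hv wa wb ha hb hab => ?_⟩
    simp only [hSdef, smul_eq_mul, Finset.mul_sum, ← Finset.sum_add_distrib]
    apply Finset.sum_le_sum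
    intro i _
    have h2 := (hptconc (x i ω)).2 hu hv ha hb hab
    simpa [smul_eq_mul] using h2
  have hLcont : ContinuousOn L (Set.Icc (0:ℝ) 1) := by
    refine continuousOn_of_dominated (fun β _ => (hfmeas β).aestronglyMeasurable)
      (fun β hβ => Filter.Eventually.of_forall fun y => by
        rw [Real.norm_eq_abs]; exact habs β hβ y)
      (integrable_const c) ?_
    refine Filter.Eventually.of_forall fun y => ?_
    apply ContinuousOn.log
    · exact (((continuous_const.sub continuous_id).mul continuous_const).add
        (continuous_id.mul continuous_const)).continuousOn
    · intro β hβ; exact (hmix β hβ y).ne'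
  -- the right-side bad event
  have right : ∃ B : Set Ω, (ℙ B).toReal ≤ ε / 2 ∧
      ∀ ω, αstar ≤ αhat ω → 2 * t < L αstar - L (αhat ω) → ω ∈ B := by
    by_cases hdeg : L αstar - 2 * t ≤ L 1
    · refine ⟨∅, by simp; positivity, ?_⟩
      intro ω hω hgap
      exfalso
      have hseg : αhat ω ∈ segment ℝ αstar (1:ℝ) := by
        rw [segment_eq_Icc hαstar.2]
        exact ⟨hω, (hαhat ω).2⟩
      have hge := hLconc.ge_on_segment hαstar
        (⟨zero_le_one, le_rfl⟩ : (1:ℝ) ∈ Set.Icc (0:ℝ) 1) hseg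
      have hminge : L αstar - 2 * t ≤ min (L αstar) (L 1) :=
        le_min (by linarith) hdeg
      linarith
    · push_neg at hdeg
      have hsub : Set.Icc αstar 1 ⊆ Set.Icc (0:ℝ) 1 := Set.Icc_subset_Icc hαstar.1 le_rfl
      have hivt := intermediate_value_Icc' hαstar.2 (hLcont.mono hsub)
      have hmem : L αstar - 2 * t ∈ Set.Icc (L 1) (L αstar) := ⟨hdeg.le, by linarith⟩
      obtain ⟨βp, hβpmem, hβpval⟩ := hivt hmem
      have hβp01 : βp ∈ Set.Icc (0:ℝ) 1 := hsub hβpmem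
      refine ⟨{ω | 0 ≤ ∑ i, (Real.log ((1 - βp) * P (x i ω) + βp * Q (x i ω))
          - Real.log ((1 - αstar) * P (x i ω) + αstar * Q (x i ω)))}, ?_, ?_⟩
      · have hgm : Measurable (fun y => Real.log ((1 - βp) * P y + βp * Q y)
            - Real.log ((1 - αstar) * P y + αstar * Q y)) :=
          (hfmeas βp).sub (hfmeas αstar)
        have hgabs : ∀ y, |Real.log ((1 - βp) * P y + βp * Q y)
            - Real.log ((1 - αstar) * P y + αstar * Q y)| ≤ 2 * c := by
          intro y
          have h1 := abs_le.1 (habs βp hβp01 y)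
          have h2 := abs_le.1 (habs αstar hαstar y)
          rw [abs_le]
          constructor <;> linarith
        have hgmean : (∫ y, (Real.log ((1 - βp) * P y + βp * Q y)
            - Real.log ((1 - αstar) * P y + αstar * Q y)) ∂μ) = -(2 * t) := by
          rw [integral_sub (hfint βp hβp01) (hfint αstar hαstar)]
          have e1 : (∫ y, Real.log ((1 - βp) * P y + βp * Q y) ∂μ) = L βp := rfl
          have e2 : (∫ y, Real.log ((1 - αstar) * P y + αstar * Q y) ∂μ) = L αstar := rfl
          rw [e1, e2, hβpval]
          ring
        have hch := chernoff_iid hxm hindep hlaw hgm hc htpos hgabs hgmean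
        rw [hexp] at hch
        exact hch
      · intro ω hω hgap
        have hβlt : βp < αhat ω := by
          by_contra hle
          push_neg at hle
          have hseg : αhat ω ∈ segment ℝ αstar βp := by
            rw [segment_eq_Icc hβpmem.1]
            exact ⟨hω, hle⟩
          have hge := hLconc.ge_on_segment hαstar hβp01 hseg
          have hminv : min (L αstar) (L βp) = L βp :=
            min_eq_right (by rw [hβpval]; linarith)
          rw [hminv, hβpval] at hge
          linarith
        have hseg2 : βp ∈ segment ℝ αstar (αhat ω) := by
          rw [segment_eq_Icc hω]
          exact ⟨hβpmem.1, hβlt.le⟩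
        have hge2 := (hSconc ω).ge_on_segment hαstar (hαhat ω) hseg2
        have hminS : min (S αstar ω) (S (αhat ω) ω) = S αstar ω :=
          min_eq_left (hSmax ω αstar hαstar)
        rw [hminS] at hge2
        simp only [Set.mem_setOf_eq]
        have hsum : ∑ i, (Real.log ((1 - βp) * P (x i ω) + βp * Q (x i ω))
            - Real.log ((1 - αstar) * P (x i ω) + αstar * Q (x i ω)))
            = S βp ω - S αstar ω := by
          rw [Finset.sum_sub_distrib]
        rw [hsum]
        linarith
  -- the left-side bad event
  have left : ∃ B : Set Ω, (ℙ B).toReal ≤ ε / 2 ∧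
      ∀ ω, αhat ω ≤ αstar → 2 * t < L αstar - L (αhat ω) → ω ∈ B := by
    by_cases hdeg : L αstar - 2 * t ≤ L 0
    · refine ⟨∅, by simp; positivity, ?_⟩
      intro ω hω hgap
      exfalso
      have hseg : αhat ω ∈ segment ℝ (0:ℝ) αstar := by
        rw [segment_eq_Icc hαstar.1]
        exact ⟨(hαhat ω).1, hω⟩
      have hge := hLconc.ge_on_segment
        (⟨le_rfl, zero_le_one⟩ : (0:ℝ) ∈ Set.Icc (0:ℝ) 1) hαstar hseg
      have hminge : L αstar - 2 * t ≤ min (L 0) (L αstar) :=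
        le_min hdeg (by linarith)
      linarith
    · push_neg at hdeg
      have hsub : Set.Icc (0:ℝ) αstar ⊆ Set.Icc (0:ℝ) 1 := Set.Icc_subset_Icc le_rfl hαstar.2
      have hivt := intermediate_value_Icc hαstar.1 (hLcont.mono hsub)
      have hmem : L αstar - 2 * t ∈ Set.Icc (L 0) (L αstar) := ⟨hdeg.le, by linarith⟩
      obtain ⟨βm, hβmmem, hβmval⟩ := hivt hmem
      have hβm01 : βm ∈ Set.Icc (0:ℝ) 1 := hsub hβmmem
      refine ⟨{ω | 0 ≤ ∑ i, (Real.log ((1 - βm) * P (x i ω) + βm * Q (x i ω))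
          - Real.log ((1 - αstar) * P (x i ω) + αstar * Q (x i ω)))}, ?_, ?_⟩
      · have hgm : Measurable (fun y => Real.log ((1 - βm) * P y + βm * Q y)
            - Real.log ((1 - αstar) * P y + αstar * Q y)) :=
          (hfmeas βm).sub (hfmeas αstar)
        have hgabs : ∀ y, |Real.log ((1 - βm) * P y + βm * Q y)
            - Real.log ((1 - αstar) * P y + αstar * Q y)| ≤ 2 * c := by
          intro y
          have h1 := abs_le.1 (habs βm hβm01 y)
          have h2 := abs_le.1 (habs αstar hαstar y)
          rw [abs_le]
          constructor <;> linarith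
        have hgmean : (∫ y, (Real.log ((1 - βm) * P y + βm * Q y)
            - Real.log ((1 - αstar) * P y + αstar * Q y)) ∂μ) = -(2 * t) := by
          rw [integral_sub (hfint βm hβm01) (hfint αstar hαstar)]
          have e1 : (∫ y, Real.log ((1 - βm) * P y + βm * Q y) ∂μ) = L βm := rfl
          have e2 : (∫ y, Real.log ((1 - αstar) * P y + αstar * Q y) ∂μ) = L αstar := rfl
          rw [e1, e2, hβmval]
          ring
        have hch := chernoff_iid hxm hindep hlaw hgm hc htpos hgabs hgmean
        rw [hexp] at hch
        exact hch
      · intro ω hω hgap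
        have hβlt : αhat ω < βm := by
          by_contra hle
          push_neg at hle
          have hseg : αhat ω ∈ segment ℝ βm αstar := by
            rw [segment_eq_Icc hβmmem.2]
            exact ⟨hle, hω⟩
          have hge := hLconc.ge_on_segment hβm01 hαstar hseg
          have hminv : min (L βm) (L αstar) = L βm :=
            min_eq_left (by rw [hβmval]; linarith)
          rw [hminv, hβmval] at hge
          linarith
        have hseg2 : βm ∈ segment ℝ (αhat ω) αstar := by
          rw [segment_eq_Icc hω]
          exact ⟨hβlt.le, hβmmem.2⟩
        have hge2 := (hSconc ω).ge_on_segment (hαhat ω) hαstar hseg2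
        have hminS : min (S (αhat ω) ω) (S αstar ω) = S αstar ω :=
          min_eq_right (hSmax ω αstar hαstar)
        rw [hminS] at hge2
        simp only [Set.mem_setOf_eq]
        have hsum : ∑ i, (Real.log ((1 - βm) * P (x i ω) + βm * Q (x i ω))
            - Real.log ((1 - αstar) * P (x i ω) + αstar * Q (x i ω)))
            = S βm ω - S αstar ω := by
          rw [Finset.sum_sub_distrib]
        rw [hsum]
        linarith
  -- assembly
  obtain ⟨Bp, hBpP, hBpmem⟩ := right
  obtain ⟨Bm, hBmP, hBmmem⟩ := left
  set E := {ω : Ω | |L αstar - L (αhat ω)| ≤ 2 * t} with hEdef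
  have hcompl : Eᶜ ⊆ Bp ∪ Bm := by
    intro ω hω
    rw [Set.mem_compl_iff, hEdef, Set.mem_setOf_eq, not_le] at hω
    have habs' : |L αstar - L (αhat ω)| = L αstar - L (αhat ω) :=
      abs_of_nonneg (by linarith [hLmax (αhat ω) (hαhat ω)])
    rw [habs'] at hω
    rcases le_total αstar (αhat ω) with hcase | hcase
    · exact Set.mem_union_left _ (hBpmem ω hcase hω)
    · exact Set.mem_union_right _ (hBmmem ω hcase hω)
  have hBp' : ℙ Bp ≤ ENNReal.ofReal (ε / 2) := by
    rw [← ENNReal.ofReal_toReal (measure_ne_top ℙ Bp)]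
    exact ENNReal.ofReal_le_ofReal hBpP
  have hBm' : ℙ Bm ≤ ENNReal.ofReal (ε / 2) := by
    rw [← ENNReal.ofReal_toReal (measure_ne_top ℙ Bm)]
    exact ENNReal.ofReal_le_ofReal hBmP
  have hPc : ℙ Eᶜ ≤ ENNReal.ofReal ε :=
    calc ℙ Eᶜ ≤ ℙ (Bp ∪ Bm) := measure_mono hcompl
      _ ≤ ℙ Bp + ℙ Bm := measure_union_le _ _
      _ ≤ ENNReal.ofReal (ε / 2) + ENNReal.ofReal (ε / 2) := add_le_add hBp' hBm'
      _ = ENNReal.ofReal ε := by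
          rw [← ENNReal.ofReal_add (by positivity) (by positivity)]
          norm_num
  have hone : (1:ENNReal) ≤ ℙ E + ENNReal.ofReal ε := by
    calc (1:ENNReal) = ℙ (E ∪ Eᶜ) := by rw [Set.union_compl_self]; exact measure_univ.symm
      _ ≤ ℙ E + ℙ Eᶜ := measure_union_le _ _
      _ ≤ ℙ E + ENNReal.ofReal ε := add_le_add le_rfl hPc
  have hfin : ℙ E ≠ ⊤ := measure_ne_top _ _
  have hsumfin : ℙ E + ENNReal.ofReal ε ≠ ⊤ :=
    ENNReal.add_ne_top.2 ⟨hfin, ENNReal.ofReal_ne_top⟩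
  have hto := ENNReal.toReal_mono hsumfin hone
  rw [ENNReal.toReal_one, ENNReal.toReal_add hfin ENNReal.ofReal_ne_top,
    ENNReal.toReal_ofReal hε0.le] at hto
  linarith
end

section
/- (Theorem 1 of the paper, with the explicit constant produced by its proof.) Let X be a measurable space, μ a probability measure on X, and P, Q : X → ℝ measurable with P(x) > 0, Q(x) > 0 and max{|log P(x)|, |log Q(x)|} ≤ c for all x ∈ X, where c > 0. Suppose there is a constant κ > 0 such that (Q(x) − P(x))²/max{P(x)², Q(x)²} ≥ κ for all x ∈ X. Let x₁, …, xₙ be i.i.d. with law μ, let α* be a maximizer of the population log-likelihood L over [0,1] with L′(α*) = 0, and let α̂ be a maximizer of the empirical log-likelihood L̂ₙ over [0,1]. Then for every δ ∈ (0,1), with probability at least 1−δ, |α* − α̂| ≤ √(4·√(2c²·log(2/δ)/n)/κ); in particular |α* − α̂| = O(√(log^{1/2}(1/δ)/(n^{1/2}·κ))). -/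
open MeasureTheory ProbabilityTheory Real
open Set
open scoped ENNReal

lemma aux_S_pos {p : ℝ} (hp0 : 0 ≤ p) (hp1 : p ≤ 1) (u : ℝ) :
    0 < 1 - p + p * Real.exp u := by
  rcases le_or_gt 1 (Real.exp u) with h | h
  · nlinarith [Real.exp_pos u]
  · nlinarith [Real.exp_pos u]

lemma aux_phi {p : ℝ} (hp0 : 0 ≤ p) (hp1 : p ≤ 1) (u : ℝ) :
    -p * u + Real.log (1 - p + p * Real.exp u) ≤ u ^ 2 / 8 := by
  set S : ℝ → ℝ := fun v => 1 - p + p * Real.exp v with hSdef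
  have hS : ∀ v, 0 < S v := fun v => aux_S_pos hp0 hp1 v
  set q : ℝ → ℝ := fun v => p * Real.exp v / S v with hqdef
  set ψ : ℝ → ℝ := fun v => v ^ 2 / 8 + p * v - Real.log (S v) with hψdef
  set ψ' : ℝ → ℝ := fun v => v / 4 + p - q v with hψ'def
  have hSd : ∀ v, HasDerivAt S (p * Real.exp v) v := by
    intro v
    exact ((Real.hasDerivAt_exp v).const_mul p).const_add (1 - p)
  have hψd : ∀ v, HasDerivAt ψ (ψ' v) v := by
    intro v
    have h1 : HasDerivAt (fun v : ℝ => v ^ 2 / 8 + p * v)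
        (v / 4 + p) v := by
      have := ((hasDerivAt_pow 2 v).div_const 8).add ((hasDerivAt_id v).const_mul p)
      exact this.congr_deriv (by rw [show (2:ℕ) - 1 = 1 from rfl]; ring)
    have h2 : HasDerivAt (fun v => Real.log (S v)) (q v) v := by
      have := (hSd v).log (ne_of_gt (hS v))
      simpa [hqdef] using this
    exact h1.sub h2
  have hqd : ∀ v, HasDerivAt q (q v - q v ^ 2) v := by
    intro v
    have hnum : HasDerivAt (fun v => p * Real.exp v) (p * Real.exp v) v :=
      (Real.hasDerivAt_exp v).const_mul p
    have := hnum.div (hSd v) (ne_of_gt (hS v))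
    refine this.congr_deriv ?_
    have h0 := (hS v).ne'
    simp only [hqdef]
    field_simp
  have hψ'd : ∀ v, HasDerivAt ψ' (1/4 - (q v - q v ^ 2)) v := by
    intro v
    have h1 : HasDerivAt (fun v : ℝ => v / 4 + p) (1/4) v := by
      simpa using ((hasDerivAt_id v).div_const 4).add_const p
    exact h1.sub (hqd v)
  have hq01 : ∀ v, 0 ≤ q v ∧ q v ≤ 1 := by
    intro v
    constructor
    · exact div_nonneg (by positivity) (hS v).le
    · rw [hqdef, div_le_one (hS v)]
      simp only [hSdef]
      nlinarith [Real.exp_pos v]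
  have hψ''nonneg : ∀ v, (0:ℝ) ≤ 1/4 - (q v - q v ^ 2) := by
    intro v
    nlinarith [sq_nonneg (q v - 1/2)]
  have hψ'mono : Monotone ψ' := by
    apply monotone_of_deriv_nonneg
    · exact fun v => (hψ'd v).differentiableAt
    · intro v
      rw [(hψ'd v).deriv]
      exact hψ''nonneg v
  have hψ'0 : ψ' 0 = 0 := by
    simp [hψ'def, hqdef, hSdef]
  have hψ0 : ψ 0 = 0 := by
    simp [hψdef, hSdef]
  have hψnonneg : ∀ v, 0 ≤ ψ v := by
    intro v
    rcases le_total 0 v with hv | hv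
    · have : MonotoneOn ψ (Ici 0) := by
        apply monotoneOn_of_deriv_nonneg (convex_Ici 0)
        · exact fun v _ => (hψd v).differentiableAt.continuousAt.continuousWithinAt
        · exact fun v _ => (hψd v).differentiableAt.differentiableWithinAt
        · intro v hv
          rw [(hψd v).deriv]
          simp only [interior_Ici, mem_Ioi] at hv
          have := hψ'mono hv.le
          rw [hψ'0] at this
          exact this
      have := this (self_mem_Ici) (mem_Ici.2 hv) hv
      rwa [hψ0] at this
    · have : AntitoneOn ψ (Iic 0) := by
        apply antitoneOn_of_deriv_nonpos (convex_Iic 0)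
        · exact fun v _ => (hψd v).differentiableAt.continuousAt.continuousWithinAt
        · exact fun v _ => (hψd v).differentiableAt.differentiableWithinAt
        · intro v hv
          rw [(hψd v).deriv]
          simp only [interior_Iic, mem_Iio] at hv
          have := hψ'mono hv.le
          rw [hψ'0] at this
          exact this
      have := this (mem_Iic.2 hv) (self_mem_Iic) hv
      rwa [hψ0] at this
  have := hψnonneg u
  simp only [hψdef] at this
  linarith

lemma hoeffding_mgf {Y : Type*} [MeasurableSpace Y] (ν : Measure Y) [IsProbabilityMeasure ν]
    (Z : Y → ℝ) (hZm : Measurable Z) {a b : ℝ} (hab : ∀ y, Z y ∈ Set.Icc a b)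
    (hmean : ∫ y, Z y ∂ν = 0) (t : ℝ) :
    mgf Z ν t ≤ Real.exp (t ^ 2 * (b - a) ^ 2 / 8) := by
  have hZint : Integrable Z ν := by
    apply Integrable.mono' (integrable_const (max |a| |b|)) hZm.aestronglyMeasurable
    filter_upwards with y
    rcases hab y with ⟨h1, h2⟩
    rw [Real.norm_eq_abs, abs_le]
    constructor
    · calc -(max |a| |b|) ≤ -|a| := by simp
        _ ≤ a := neg_abs_le a
        _ ≤ Z y := h1
    · calc Z y ≤ b := h2
        _ ≤ |b| := le_abs_self b
        _ ≤ max |a| |b| := le_max_right _ _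
  have ha0 : a ≤ 0 := by
    have : ∫ _ : Y, a ∂ν ≤ ∫ y, Z y ∂ν :=
      integral_mono (integrable_const a) hZint (fun y => (hab y).1)
    simpa [hmean] using this
  have hb0 : 0 ≤ b := by
    have : ∫ y, Z y ∂ν ≤ ∫ _ : Y, b ∂ν :=
      integral_mono hZint (integrable_const b) (fun y => (hab y).2)
    simpa [hmean] using this
  rcases eq_or_lt_of_le (ha0.trans hb0) with hae | hlt
  · -- a = b = 0, so Z ≡ 0
    have ha' : a = 0 := le_antisymm ha0 (hae ▸ hb0)
    have hb' : b = 0 := by rw [← hae, ha']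
    have hZ0 : ∀ y, Z y = 0 := by
      intro y
      have := hab y
      rw [ha', hb'] at this
      exact le_antisymm this.2 this.1
    have : mgf Z ν t = 1 := by
      rw [mgf]
      simp only [hZ0, mul_zero, Real.exp_zero]
      simp [measure_univ]
    rw [this]
    exact Real.one_le_exp (by positivity)
  · set p : ℝ := -a / (b - a) with hpdef
    have hba : 0 < b - a := by linarith
    have hp0 : 0 ≤ p := div_nonneg (neg_nonneg.2 ha0) hba.le
    have hp1 : p ≤ 1 := by
      rw [hpdef, div_le_one hba]; linarith
    set c1 : ℝ := Real.exp (t * a) / (b - a) with hc1def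
    set c2 : ℝ := Real.exp (t * b) / (b - a) with hc2def
    -- pointwise convexity bound
    have hpt : ∀ y, Real.exp (t * Z y) ≤ c1 * (b - Z y) + c2 * (Z y - a) := by
      intro y
      rcases hab y with ⟨h1, h2⟩
      set θ : ℝ := (b - Z y) / (b - a) with hθdef
      have hθ0 : 0 ≤ θ := div_nonneg (by linarith) hba.le
      have hθ1 : θ ≤ 1 := by rw [hθdef, div_le_one hba]; linarith
      have hsum : θ + (1 - θ) = 1 := by ring
      have hcv := convexOn_exp.2 (Set.mem_univ (t * a)) (Set.mem_univ (t * b)) hθ0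
        (by linarith : (0:ℝ) ≤ 1 - θ) hsum
      have harg : θ • (t * a) + (1 - θ) • (t * b) = t * Z y := by
        simp only [smul_eq_mul, hθdef]
        field_simp
        ring
      rw [harg] at hcv
      have h1θ : 1 - θ = (Z y - a) / (b - a) := by
        rw [hθdef]; field_simp; ring
      rw [h1θ] at hcv
      simp only [smul_eq_mul, hθdef] at hcv
      refine hcv.trans_eq ?_
      rw [hc1def, hc2def]
      ring
    have hint1 : Integrable (fun y => c1 * (b - Z y)) ν :=
      ((integrable_const b).sub hZint).const_mul c1
    have hint2 : Integrable (fun y => c2 * (Z y - a)) ν :=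
      (hZint.sub (integrable_const a)).const_mul c2
    have hmgf : mgf Z ν t ≤ c1 * b + c2 * (-a) := by
      have hmono := integral_mono ?_ (hint1.add hint2) hpt
      · simp only [Pi.add_apply] at hmono
        rw [mgf]
        refine hmono.trans_eq ?_
        rw [integral_add hint1 hint2, integral_const_mul, integral_const_mul,
            integral_sub (integrable_const b) hZint, integral_sub hZint (integrable_const a),
            hmean, integral_const, integral_const]
        simp [measure_univ]
      · apply Integrable.mono' (integrable_const (Real.exp (|t| * max |a| |b|)))
          ((Real.measurable_exp.comp (hZm.const_mul t)).aestronglyMeasurable)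
        filter_upwards with y
        simp only [Function.comp]
        rw [Real.norm_eq_abs, abs_of_nonneg (Real.exp_pos _).le]
        apply Real.exp_le_exp.2
        calc t * Z y ≤ |t * Z y| := le_abs_self _
          _ = |t| * |Z y| := abs_mul t (Z y)
          _ ≤ |t| * max |a| |b| := by
              apply mul_le_mul_of_nonneg_left _ (abs_nonneg t)
              rcases hab y with ⟨h1, h2⟩
              rcases le_total 0 (Z y) with h | h
              · rw [abs_of_nonneg h]; exact le_max_of_le_right ((le_abs_self b).trans' h2)
              · rw [abs_of_nonpos h]; exact le_max_of_le_left (by rw [abs_of_nonpos ha0]; linarith)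
    refine hmgf.trans ?_
    set u : ℝ := t * (b - a) with hudef
    have hSpos : (0:ℝ) < 1 - p + p * Real.exp u := by
      rcases le_or_gt 1 (Real.exp u) with h | h
      · nlinarith [Real.exp_pos u]
      · nlinarith [Real.exp_pos u]
    have key : c1 * b + c2 * (-a)
        = Real.exp (-p * u + Real.log (1 - p + p * Real.exp u)) := by
      rw [Real.exp_add, Real.exp_log hSpos]
      have h1 : Real.exp (-p * u) = Real.exp (t * a) := by
        congr 1
        rw [hpdef, hudef]
        field_simp
      have h2 : Real.exp (t * b) = Real.exp (t * a) * Real.exp u := by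
        rw [← Real.exp_add]; congr 1; rw [hudef]; ring
      rw [h1, hc1def, hc2def, h2]
      have hbb : 1 - p = b / (b - a) := by rw [hpdef]; field_simp; ring
      rw [hbb, hpdef]
      field_simp
    rw [key]
    apply Real.exp_le_exp.2
    calc -p * u + Real.log (1 - p + p * Real.exp u) ≤ u ^ 2 / 8 := aux_phi hp0 hp1 u
      _ = t ^ 2 * (b - a) ^ 2 / 8 := by rw [hudef]; ring

/-- One-dimensional second-order Taylor-type bound on `[0,1]` from antitonicity of
`u' + κ·id`. -/
lemma taylor2 {u u' : ℝ → ℝ} {κ α β : ℝ}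
    (hα : α ∈ Set.Icc (0:ℝ) 1) (hβ : β ∈ Set.Icc (0:ℝ) 1)
    (hd : ∀ t ∈ Set.Icc (0:ℝ) 1, HasDerivAt u (u' t) t)
    (hcont : ContinuousOn u' (Set.Icc (0:ℝ) 1))
    (hmono : ∀ ⦃s t⦄, s ∈ Set.Icc (0:ℝ) 1 → t ∈ Set.Icc (0:ℝ) 1 → s ≤ t →
      u' t + κ * t ≤ u' s + κ * s) :
    u β ≤ u α + u' α * (β - α) - κ / 2 * (β - α) ^ 2 := by
  rcases le_total α β with hab | hab
  · have huIcc : Set.uIcc α β ⊆ Set.Icc (0:ℝ) 1 := by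
      rw [Set.uIcc_of_le hab]
      exact Set.Icc_subset_Icc hα.1 hβ.2
    have hftc : ∫ t in α..β, u' t = u β - u α := by
      apply intervalIntegral.integral_eq_sub_of_hasDerivAt
      · exact fun t ht => hd t (huIcc ht)
      · exact (hcont.mono huIcc).intervalIntegrable
    have hbound : ∫ t in α..β, u' t ≤ ∫ t in α..β, (u' α + κ * α - κ * t) := by
      apply intervalIntegral.integral_mono_on hab
      · exact (hcont.mono huIcc).intervalIntegrable
      · apply IntervalIntegrable.sub
        · exact intervalIntegrable_const
        · exact (intervalIntegral.intervalIntegrable_id).const_mul κ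
      · intro t ht
        have h1 : t ∈ Set.Icc (0:ℝ) 1 := ⟨hα.1.trans ht.1, ht.2.trans hβ.2⟩
        have := hmono hα h1 ht.1
        linarith
    have hrhs : ∫ t in α..β, (u' α + κ * α - κ * t)
        = u' α * (β - α) - κ / 2 * (β - α) ^ 2 := by
      rw [intervalIntegral.integral_sub intervalIntegrable_const
          ((intervalIntegral.intervalIntegrable_id).const_mul κ)]
      rw [intervalIntegral.integral_const, intervalIntegral.integral_const_mul,
          integral_id]
      simp only [smul_eq_mul]
      ring
    rw [hftc] at hbound
    rw [hrhs] at hbound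
    linarith
  · have huIcc : Set.uIcc β α ⊆ Set.Icc (0:ℝ) 1 := by
      rw [Set.uIcc_of_le hab]
      exact Set.Icc_subset_Icc hβ.1 hα.2
    have hftc : ∫ t in β..α, u' t = u α - u β := by
      apply intervalIntegral.integral_eq_sub_of_hasDerivAt
      · exact fun t ht => hd t (huIcc ht)
      · exact (hcont.mono huIcc).intervalIntegrable
    have hbound : ∫ t in β..α, (u' α + κ * α - κ * t) ≤ ∫ t in β..α, u' t := by
      apply intervalIntegral.integral_mono_on hab
      · apply IntervalIntegrable.sub
        · exact intervalIntegrable_const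
        · exact (intervalIntegral.intervalIntegrable_id).const_mul κ
      · exact (hcont.mono huIcc).intervalIntegrable
      · intro t ht
        have h1 : t ∈ Set.Icc (0:ℝ) 1 := ⟨hβ.1.trans ht.1, ht.2.trans hα.2⟩
        have := hmono h1 hα ht.2
        linarith
    have hrhs : ∫ t in β..α, (u' α + κ * α - κ * t)
        = u' α * (α - β) + κ / 2 * (β - α) ^ 2 := by
      rw [intervalIntegral.integral_sub intervalIntegrable_const
          ((intervalIntegral.intervalIntegrable_id).const_mul κ)]
      rw [intervalIntegral.integral_const, intervalIntegral.integral_const_mul,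
          integral_id]
      simp only [smul_eq_mul]
      ring
    rw [hftc] at hbound
    rw [hrhs] at hbound
    linarith

section pointwise
variable {pp qq : ℝ} (hp : 0 < pp) (hq : 0 < qq)

lemma mix_ge (t : ℝ) (ht : t ∈ Set.Icc (0:ℝ) 1) : min pp qq ≤ (1 - t) * pp + t * qq := by
  have h1 : min pp qq ≤ pp := min_le_left _ _
  have h2 : min pp qq ≤ qq := min_le_right _ _
  nlinarith [ht.1, ht.2]

lemma mix_le (t : ℝ) (ht : t ∈ Set.Icc (0:ℝ) 1) : (1 - t) * pp + t * qq ≤ max pp qq := by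
  have h1 : pp ≤ max pp qq := le_max_left _ _
  have h2 : qq ≤ max pp qq := le_max_right _ _
  nlinarith [ht.1, ht.2]

include hp hq in
lemma mix_pos (t : ℝ) (ht : t ∈ Set.Icc (0:ℝ) 1) : 0 < (1 - t) * pp + t * qq :=
  lt_of_lt_of_le (lt_min hp hq) (mix_ge t ht)

include hp hq in
lemma mix_hasDerivAt (t : ℝ) (hmix : (1 - t) * pp + t * qq ≠ 0) :
    HasDerivAt (fun a => Real.log ((1 - a) * pp + a * qq))
      ((qq - pp) / ((1 - t) * pp + t * qq)) t := by
  have h1 : HasDerivAt (fun a : ℝ => (1 - a) * pp + a * qq) (qq - pp) t := by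
    have := ((hasDerivAt_id t).const_sub 1).mul_const pp |>.add ((hasDerivAt_id t).mul_const qq)
    exact this.congr_deriv (by ring)
  exact h1.log hmix

include hp hq in
lemma mix_log_mem {c : ℝ} (hbp : |Real.log pp| ≤ c) (hbq : |Real.log qq| ≤ c)
    (t : ℝ) (ht : t ∈ Set.Icc (0:ℝ) 1) :
    |Real.log ((1 - t) * pp + t * qq)| ≤ c := by
  have hmin : (0:ℝ) < min pp qq := lt_min hp hq
  rw [abs_le]
  constructor
  · calc -c ≤ min (Real.log pp) (Real.log qq) := by
          rcases le_total (Real.log pp) (Real.log qq) with h | h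
          · rw [min_eq_left h]; linarith [(abs_le.1 hbp).1]
          · rw [min_eq_right h]; linarith [(abs_le.1 hbq).1]
      _ = Real.log (min pp qq) := by
          rcases le_total pp qq with h | h
          · rw [min_eq_left h, min_eq_left (Real.log_le_log hp h)]
          · rw [min_eq_right h, min_eq_right (Real.log_le_log hq h)]
      _ ≤ Real.log ((1 - t) * pp + t * qq) := Real.log_le_log hmin (mix_ge t ht)
  · calc Real.log ((1 - t) * pp + t * qq) ≤ Real.log (max pp qq) :=
          Real.log_le_log (mix_pos hp hq t ht) (mix_le t ht)
      _ = max (Real.log pp) (Real.log qq) := by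
          rcases le_total pp qq with h | h
          · rw [max_eq_right h, max_eq_right (Real.log_le_log hp h)]
          · rw [max_eq_left h, max_eq_left (Real.log_le_log hq h)]
      _ ≤ c := by
          rcases le_total (Real.log pp) (Real.log qq) with h | h
          · rw [max_eq_right h]; exact (abs_le.1 hbq).2
          · rw [max_eq_left h]; exact (abs_le.1 hbp).2

include hp hq in
/-- Pointwise concavity inequality for the log-mixture. -/
lemma mix_concave {a b t s : ℝ} (ha : a ∈ Set.Icc (0:ℝ) 1) (hb : b ∈ Set.Icc (0:ℝ) 1)
    (ht : 0 ≤ t) (hs : 0 ≤ s) (hts : t + s = 1) :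
    t * Real.log ((1 - a) * pp + a * qq) + s * Real.log ((1 - b) * pp + b * qq) ≤
      Real.log ((1 - (t * a + s * b)) * pp + (t * a + s * b) * qq) := by
  have hconc : ConcaveOn ℝ (Set.Ioi 0) Real.log := strictConcaveOn_log_Ioi.concaveOn
  have h1 : ((1 - a) * pp + a * qq) ∈ Set.Ioi (0:ℝ) := mix_pos hp hq a ha
  have h2 : ((1 - b) * pp + b * qq) ∈ Set.Ioi (0:ℝ) := mix_pos hp hq b hb
  have := hconc.2 h1 h2 ht hs hts
  simp only [smul_eq_mul] at this
  refine this.trans_eq ?_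
  congr 1
  linear_combination pp * hts

include hp hq in
/-- Antitonicity of `u' + κ·id` where `u' t = (q-p)/mix t`. -/
lemma mix_deriv_antitone {κ : ℝ} (hsep : κ ≤ (qq - pp) ^ 2 / max (pp ^ 2) (qq ^ 2))
    {s t : ℝ} (hs : s ∈ Set.Icc (0:ℝ) 1) (ht : t ∈ Set.Icc (0:ℝ) 1) (hst : s ≤ t) :
    (qq - pp) / ((1 - t) * pp + t * qq) + κ * t ≤
      (qq - pp) / ((1 - s) * pp + s * qq) + κ * s := by
  set w : ℝ → ℝ := fun v => (qq - pp) / ((1 - v) * pp + v * qq) + κ * v with hwdef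
  have hwd : ∀ v ∈ Set.Icc (0:ℝ) 1,
      HasDerivAt w (κ - (qq - pp) ^ 2 / ((1 - v) * pp + v * qq) ^ 2) v := by
    intro v hv
    have hmix := mix_pos hp hq v hv
    have h1 : HasDerivAt (fun a : ℝ => (1 - a) * pp + a * qq) (qq - pp) v := by
      have := ((hasDerivAt_id v).const_sub 1).mul_const pp |>.add ((hasDerivAt_id v).mul_const qq)
      exact this.congr_deriv (by ring)
    have h2 : HasDerivAt (fun a : ℝ => (qq - pp) / ((1 - a) * pp + a * qq))
        (-(qq - pp) * (qq - pp) / ((1 - v) * pp + v * qq) ^ 2) v := by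
      have h2' := (h1.inv hmix.ne').const_mul (qq - pp)
      simp only [div_eq_mul_inv]
      exact h2'.congr_deriv (by ring)
    have h3 : HasDerivAt (fun a : ℝ => κ * a) κ v := by
      simpa using (hasDerivAt_id v).const_mul κ
    have := h2.add h3
    exact this.congr_deriv (by ring)
  have hanti : AntitoneOn w (Set.Icc (0:ℝ) 1) := by
    apply antitoneOn_of_deriv_nonpos (convex_Icc 0 1)
    · intro v hv
      exact (hwd v hv).differentiableAt.continuousAt.continuousWithinAt
    · intro v hv
      rw [interior_Icc] at hv
      exact (hwd v (Set.mem_Icc_of_Ioo hv)).differentiableAt.differentiableWithinAt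
    · intro v hv
      rw [interior_Icc] at hv
      have hv' := Set.mem_Icc_of_Ioo hv
      rw [(hwd v hv').deriv]
      have hmix := mix_pos hp hq v hv'
      have hmax : (0:ℝ) < max (pp ^ 2) (qq ^ 2) := by positivity
      have hle : ((1 - v) * pp + v * qq) ^ 2 ≤ max (pp ^ 2) (qq ^ 2) := by
        have := mix_le (pp := pp) (qq := qq) v hv'
        have hmax2 : max pp qq ^ 2 = max (pp ^ 2) (qq ^ 2) := by
          rcases le_total pp qq with h | h
          · rw [max_eq_right h, max_eq_right (by nlinarith : pp ^ 2 ≤ qq ^ 2)]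
          · rw [max_eq_left h, max_eq_left (by nlinarith : qq ^ 2 ≤ pp ^ 2)]
        calc ((1 - v) * pp + v * qq) ^ 2 ≤ max pp qq ^ 2 := by nlinarith
          _ = max (pp ^ 2) (qq ^ 2) := hmax2
      have : (qq - pp) ^ 2 / max (pp ^ 2) (qq ^ 2) ≤
          (qq - pp) ^ 2 / ((1 - v) * pp + v * qq) ^ 2 :=
        div_le_div_of_nonneg_left (by positivity) (by positivity) hle
      linarith [hsep.trans this]
  exact hanti hs ht hst
end pointwise

section pop
variable {X : Type*} [MeasurableSpace X] (μ : Measure X) [IsProbabilityMeasure μ]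
    (P Q : X → ℝ) (hPm : Measurable P) (hQm : Measurable Q)
    (hP : ∀ x, 0 < P x) (hQ : ∀ x, 0 < Q x)
    (c : ℝ) (hc : 0 < c)
    (hbound : ∀ x, max |Real.log (P x)| |Real.log (Q x)| ≤ c)

include hPm hQm hP hQ hbound in
lemma f_integrable (a : ℝ) (ha : a ∈ Set.Icc (0:ℝ) 1) :
    Integrable (fun y => Real.log ((1 - a) * P y + a * Q y)) μ := by
  have hmeas : Measurable (fun y => Real.log ((1 - a) * P y + a * Q y)) :=
    Real.measurable_log.comp ((hPm.const_mul (1 - a)).add (hQm.const_mul a))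
  apply Integrable.mono' (integrable_const c) hmeas.aestronglyMeasurable
  filter_upwards with y
  rw [Real.norm_eq_abs]
  exact mix_log_mem (hP y) (hQ y) ((le_max_left _ _).trans (hbound y))
    ((le_max_right _ _).trans (hbound y)) a ha

include hPm hQm hP hQ hc hbound in
lemma pop_deriv {αstar : ℝ} (hαstar : αstar ∈ Set.Icc (0:ℝ) 1) :
    HasDerivAt (fun a : ℝ => ∫ y, Real.log ((1 - a) * P y + a * Q y) ∂μ)
      (∫ y, (Q y - P y) / ((1 - αstar) * P y + αstar * Q y) ∂μ) αstar := by
  set ρ : ℝ := Real.exp (-(2*c)) / 4 with hρdef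
  have hρ : 0 < ρ := by positivity
  set K : ℝ := 4 * Real.exp (2*c) with hKdef
  have hPle : ∀ y, P y ≤ Real.exp c := by
    intro y
    have : Real.log (P y) ≤ c := (le_abs_self _).trans ((le_max_left _ _).trans (hbound y))
    calc P y = Real.exp (Real.log (P y)) := (Real.exp_log (hP y)).symm
      _ ≤ Real.exp c := Real.exp_le_exp.2 this
  have hQle : ∀ y, Q y ≤ Real.exp c := by
    intro y
    have : Real.log (Q y) ≤ c := (le_abs_self _).trans ((le_max_right _ _).trans (hbound y))
    calc Q y = Real.exp (Real.log (Q y)) := (Real.exp_log (hQ y)).symm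
      _ ≤ Real.exp c := Real.exp_le_exp.2 this
  have hPge : ∀ y, Real.exp (-c) ≤ P y := by
    intro y
    have : -c ≤ Real.log (P y) := by
      have := (abs_le.1 ((le_max_left _ _).trans (hbound y))).1; linarith
    calc Real.exp (-c) ≤ Real.exp (Real.log (P y)) := Real.exp_le_exp.2 this
      _ = P y := Real.exp_log (hP y)
  have hQge : ∀ y, Real.exp (-c) ≤ Q y := by
    intro y
    have : -c ≤ Real.log (Q y) := by
      have := (abs_le.1 ((le_max_right _ _).trans (hbound y))).1; linarith
    calc Real.exp (-c) ≤ Real.exp (Real.log (Q y)) := Real.exp_le_exp.2 this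
      _ = Q y := Real.exp_log (hQ y)
  -- lower bound for the mixture on the ball
  have hmix_lb : ∀ y, ∀ a ∈ Metric.ball αstar ρ,
      Real.exp (-c) / 2 ≤ (1 - a) * P y + a * Q y := by
    intro y a ha
    have hdist : |a - αstar| < ρ := by
      rw [Metric.mem_ball, Real.dist_eq] at ha; exact ha
    have h1 : (1 - a) * P y + a * Q y
        = ((1 - αstar) * P y + αstar * Q y) + (a - αstar) * (Q y - P y) := by ring
    have h2 : Real.exp (-c) ≤ (1 - αstar) * P y + αstar * Q y := by
      refine le_trans ?_ (mix_ge αstar hαstar)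
      exact le_min (hPge y) (hQge y)
    have hec := Real.exp_pos c
    have h3 : |(a - αstar) * (Q y - P y)| ≤ ρ * (2 * Real.exp c) := by
      rw [abs_mul]
      apply mul_le_mul hdist.le _ (abs_nonneg _) hρ.le
      rw [abs_le]
      constructor
      · have := hQ y; have := hPle y; linarith
      · have := hP y; have := hQle y; linarith
    have h4 : ρ * (2 * Real.exp c) = Real.exp (-c) / 2 := by
      rw [hρdef]
      rw [div_mul_eq_mul_div, mul_comm]
      rw [show (2:ℝ) * Real.exp c * Real.exp (-(2*c)) = 2 * (Real.exp c * Real.exp (-(2*c))) by ring]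
      rw [← Real.exp_add]
      norm_num
      rw [show c + -(2*c) = -c by ring]
      ring
    have := (abs_le.1 h3).1
    rw [h4] at this
    have := h1 ▸ (by linarith : Real.exp (-c) / 2 ≤ ((1 - αstar) * P y + αstar * Q y) + (a - αstar) * (Q y - P y))
    linarith [this]
  have key := hasDerivAt_integral_of_dominated_loc_of_lip (μ := μ)
    (F := fun a y => Real.log ((1 - a) * P y + a * Q y))
    (F' := fun y => (Q y - P y) / ((1 - αstar) * P y + αstar * Q y))
    (x₀ := αstar) (bound := fun _ => K) (Metric.ball_mem_nhds αstar hρ) ?_ ?_ ?_ ?_ ?_ ?_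
  · exact key.2
  · filter_upwards with a
    exact (Real.measurable_log.comp
      ((hPm.const_mul (1 - a)).add (hQm.const_mul a))).aestronglyMeasurable
  · exact f_integrable μ P Q hPm hQm hP hQ c hbound αstar hαstar
  · exact ((hQm.sub hPm).div
      ((hPm.const_mul (1 - αstar)).add (hQm.const_mul αstar))).aestronglyMeasurable
  · filter_upwards with y
    apply Convex.lipschitzOnWith_of_nnnorm_hasDerivWithin_le (convex_ball αstar ρ)
      (f' := fun a => (Q y - P y) / ((1 - a) * P y + a * Q y))
    · intro a ha
      have hpos : 0 < (1 - a) * P y + a * Q y :=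
        lt_of_lt_of_le (by positivity) (hmix_lb y a ha)
      exact (mix_hasDerivAt (hP y) (hQ y) a hpos.ne').hasDerivWithinAt
    · intro a ha
      have hpos : Real.exp (-c) / 2 ≤ (1 - a) * P y + a * Q y := hmix_lb y a ha
      have hpos' : 0 < (1 - a) * P y + a * Q y := lt_of_lt_of_le (by positivity) hpos
      rw [← NNReal.coe_le_coe]
      rw [Real.coe_nnabs]
      rw [coe_nnnorm, Real.norm_eq_abs]
      rw [abs_div, abs_of_pos hpos']
      have hec := Real.exp_pos c
      have hnum : |Q y - P y| ≤ 2 * Real.exp c := by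
        rw [abs_le]
        constructor
        · have := hQ y; have := hPle y; linarith
        · have := hP y; have := hQle y; linarith
      have habsK : |K| = K := abs_of_pos (by positivity)
      rw [habsK]
      calc |Q y - P y| / ((1 - a) * P y + a * Q y)
          ≤ 2 * Real.exp c / (Real.exp (-c) / 2) :=
            div_le_div₀ (by positivity) hnum (by positivity) hpos
          _ = K := by
            rw [hKdef, Real.exp_neg,
              show (2:ℝ) * Real.exp c / ((Real.exp c)⁻¹ / 2) = 4 * (Real.exp c * Real.exp c) from by
                field_simp; ring,
              ← Real.exp_add]
            ring_nf
  · exact integrable_const K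
  · filter_upwards with y
    have hpos := mix_pos (hP y) (hQ y) αstar hαstar
    exact mix_hasDerivAt (hP y) (hQ y) αstar hpos.ne'
end pop

section pop2
variable {X : Type*} [MeasurableSpace X] (μ : Measure X) [IsProbabilityMeasure μ]
    (P Q : X → ℝ) (hPm : Measurable P) (hQm : Measurable Q)
    (hP : ∀ x, 0 < P x) (hQ : ∀ x, 0 < Q x)
    (c : ℝ) (hc : 0 < c)
    (hbound : ∀ x, max |Real.log (P x)| |Real.log (Q x)| ≤ c)
    (κ : ℝ) (hκ : 0 < κ)
    (hsep : ∀ x, (Q x - P x) ^ 2 / max (P x ^ 2) (Q x ^ 2) ≥ κ)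

include hPm hQm hP hQ hc hbound in
lemma g_integrable {αstar : ℝ} (hαstar : αstar ∈ Set.Icc (0:ℝ) 1) :
    Integrable (fun y => (Q y - P y) / ((1 - αstar) * P y + αstar * Q y)) μ := by
  have hm : Measurable (fun y => (Q y - P y) / ((1 - αstar) * P y + αstar * Q y)) :=
    (hQm.sub hPm).div ((hPm.const_mul (1 - αstar)).add (hQm.const_mul αstar))
  apply Integrable.mono' (integrable_const (2 * Real.exp (2*c))) hm.aestronglyMeasurable
  filter_upwards with y
  have hec := Real.exp_pos c
  have hPle : P y ≤ Real.exp c := by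
    have h1 : Real.log (P y) ≤ c := (le_abs_self _).trans ((le_max_left _ _).trans (hbound y))
    calc P y = Real.exp (Real.log (P y)) := (Real.exp_log (hP y)).symm
      _ ≤ Real.exp c := Real.exp_le_exp.2 h1
  have hQle : Q y ≤ Real.exp c := by
    have h1 : Real.log (Q y) ≤ c := (le_abs_self _).trans ((le_max_right _ _).trans (hbound y))
    calc Q y = Real.exp (Real.log (Q y)) := (Real.exp_log (hQ y)).symm
      _ ≤ Real.exp c := Real.exp_le_exp.2 h1
  have hPge : Real.exp (-c) ≤ P y := by
    have h1 : -c ≤ Real.log (P y) := by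
      have := (abs_le.1 ((le_max_left _ _).trans (hbound y))).1; linarith
    calc Real.exp (-c) ≤ Real.exp (Real.log (P y)) := Real.exp_le_exp.2 h1
      _ = P y := Real.exp_log (hP y)
  have hQge : Real.exp (-c) ≤ Q y := by
    have h1 : -c ≤ Real.log (Q y) := by
      have := (abs_le.1 ((le_max_right _ _).trans (hbound y))).1; linarith
    calc Real.exp (-c) ≤ Real.exp (Real.log (Q y)) := Real.exp_le_exp.2 h1
      _ = Q y := Real.exp_log (hQ y)
  have hmge : Real.exp (-c) ≤ (1 - αstar) * P y + αstar * Q y :=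
    le_trans (le_min hPge hQge) (mix_ge αstar hαstar)
  have hmpos : 0 < (1 - αstar) * P y + αstar * Q y := lt_of_lt_of_le (Real.exp_pos _) hmge
  rw [Real.norm_eq_abs, abs_div, abs_of_pos hmpos]
  have hnum : |Q y - P y| ≤ 2 * Real.exp c := by
    rw [abs_le]
    constructor
    · have := hQ y; linarith
    · have := hP y; linarith
  calc |Q y - P y| / ((1 - αstar) * P y + αstar * Q y)
      ≤ 2 * Real.exp c / Real.exp (-c) := div_le_div₀ (by positivity) hnum (by positivity) hmge
    _ = 2 * Real.exp (2*c) := by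
        rw [Real.exp_neg, div_eq_mul_inv, inv_inv,
          show (2:ℝ) * Real.exp c * Real.exp c = 2 * (Real.exp c * Real.exp c) from by ring,
          ← Real.exp_add]
        ring_nf

include hPm hQm hP hQ hc hbound hκ hsep in
lemma strong_concavity {αstar : ℝ} (hαstar : αstar ∈ Set.Icc (0:ℝ) 1)
    (hstat : deriv (fun a : ℝ => ∫ y, Real.log ((1 - a) * P y + a * Q y) ∂μ) αstar = 0)
    {β : ℝ} (hβ : β ∈ Set.Icc (0:ℝ) 1) :
    ∫ y, Real.log ((1 - β) * P y + β * Q y) ∂μ ≤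
      (∫ y, Real.log ((1 - αstar) * P y + αstar * Q y) ∂μ) - κ / 2 * (β - αstar) ^ 2 := by
  set g : X → ℝ := fun y => (Q y - P y) / ((1 - αstar) * P y + αstar * Q y) with hgdef
  have hgzero : ∫ y, g y ∂μ = 0 := by
    have hd := pop_deriv μ P Q hPm hQm hP hQ c hc hbound hαstar
    rw [← hd.deriv]
    exact hstat
  have hgint : Integrable g μ := g_integrable μ P Q hPm hQm hP hQ c hc hbound hαstar
  have hpt : ∀ y, Real.log ((1 - β) * P y + β * Q y) ≤
      Real.log ((1 - αstar) * P y + αstar * Q y) + g y * (β - αstar)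
        - κ / 2 * (β - αstar) ^ 2 := by
    intro y
    have := taylor2 (u := fun a => Real.log ((1 - a) * P y + a * Q y))
      (u' := fun t => (Q y - P y) / ((1 - t) * P y + t * Q y)) (κ := κ)
      hαstar hβ
      (fun t ht => mix_hasDerivAt (hP y) (hQ y) t (mix_pos (hP y) (hQ y) t ht).ne')
      ?_ ?_
    · exact this
    · apply ContinuousOn.div continuousOn_const
      · exact (((continuous_const.sub continuous_id).mul continuous_const).add
          (continuous_id.mul continuous_const)).continuousOn
      · exact fun t ht => (mix_pos (hP y) (hQ y) t ht).ne'
    · intro s t hs ht hst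
      exact mix_deriv_antitone (hP y) (hQ y) (hsep y) hs ht hst
  have hfβ := f_integrable μ P Q hPm hQm hP hQ c hbound β hβ
  have hfα := f_integrable μ P Q hPm hQm hP hQ c hbound αstar hαstar
  have hrhsint : Integrable (fun y => Real.log ((1 - αstar) * P y + αstar * Q y)
      + g y * (β - αstar) - κ / 2 * (β - αstar) ^ 2) μ :=
    (hfα.add (hgint.mul_const _)).sub (integrable_const _)
  have hmono := integral_mono hfβ hrhsint hpt
  refine hmono.trans_eq ?_
  have h1 : Integrable (fun y => Real.log ((1 - αstar) * P y + αstar * Q y)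
      + g y * (β - αstar)) μ := hfα.add (hgint.mul_const _)
  rw [integral_sub h1 (integrable_const _),
    integral_add hfα (hgint.mul_const _), integral_mul_const, hgzero, integral_const]
  simp [measure_univ]
end pop2

lemma hoeff_tail {Ω : Type*} [MeasureSpace Ω] [IsProbabilityMeasure (ℙ : Measure Ω)]
    {X : Type*} [MeasurableSpace X] (μ : Measure X) [IsProbabilityMeasure μ]
    (n : ℕ) (x : Fin n → Ω → X) (hxm : ∀ i, Measurable (x i))
    (hindep : iIndepFun x ℙ)
    (hlaw : ∀ i, Measure.map (x i) ℙ = μ)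
    (h : X → ℝ) (hhm : Measurable h) (C : ℝ) (hC : 0 < C) (hb : ∀ y, |h y| ≤ C)
    (s : ℝ) (hs : 0 ≤ s) :
    (ℙ {ω | (n:ℝ) * (∫ y, h y ∂μ) + (n:ℝ) * s ≤ ∑ i, h (x i ω)}).toReal ≤
      Real.exp (-(n:ℝ) * s ^ 2 / (2 * C ^ 2)) := by
  set m : ℝ := ∫ y, h y ∂μ with hmdef
  have hhint : Integrable h μ := by
    apply Integrable.mono' (integrable_const C) hhm.aestronglyMeasurable
    filter_upwards with y using (Real.norm_eq_abs _ ▸ hb y)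
  have hmabs : |m| ≤ C := by
    rw [hmdef]
    calc |∫ y, h y ∂μ| ≤ ∫ y, |h y| ∂μ := by
          simpa [Real.norm_eq_abs] using norm_integral_le_integral_norm (μ := μ) h
      _ ≤ ∫ _ : X, C ∂μ := integral_mono hhint.abs (integrable_const C) (fun y => hb y)
      _ = C := by simp [measure_univ]
  set Z : X → ℝ := fun v => h v - m with hZdef
  have hZm : Measurable Z := hhm.sub measurable_const
  set Yf : Fin n → Ω → ℝ := fun i ω => Z (x i ω) with hYdef
  have hYm : ∀ i, Measurable (Yf i) := fun i => hZm.comp (hxm i)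
  have hYindep : iIndepFun Yf ℙ :=
    hindep.comp (fun _ => Z) (fun _ => hZm)
  have hZbd : ∀ v, Z v ∈ Set.Icc (-C - m) (C - m) := by
    intro v
    constructor
    · have := (abs_le.1 (hb v)).1; simp only [hZdef]; linarith
    · have := (abs_le.1 (hb v)).2; simp only [hZdef]; linarith
  have hZmean : ∫ v, Z v ∂μ = 0 := by
    rw [hZdef]
    rw [integral_sub hhint (integrable_const m)]
    simp [measure_univ, hmdef]
  set t : ℝ := s / C ^ 2 with htdef
  have ht : 0 ≤ t := by positivity
  -- event rewriting
  have hev : {ω | (n:ℝ) * m + (n:ℝ) * s ≤ ∑ i, h (x i ω)} =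
      {ω : Ω | (n:ℝ) * s ≤ (∑ i, Yf i) ω} := by
    ext ω
    simp only [Set.mem_setOf_eq, Finset.sum_apply, hYdef, hZdef]
    rw [Finset.sum_sub_distrib]
    simp only [Finset.sum_const, Finset.card_univ, Fintype.card_fin, nsmul_eq_mul]
    constructor <;> intro hh <;> linarith
  -- integrability of exponentials
  have hYint : ∀ i, Integrable (fun ω => Real.exp (t * Yf i ω)) ℙ := by
    intro i
    apply Integrable.mono' (integrable_const (Real.exp (t * (2 * C))))
      (((hYm i).const_mul t).exp.aestronglyMeasurable)
    filter_upwards with ω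
    rw [Real.norm_eq_abs, abs_of_nonneg (Real.exp_pos _).le]
    apply Real.exp_le_exp.2
    apply mul_le_mul_of_nonneg_left _ ht
    have h1 := (hZbd (x i ω)).1
    have h2 := (hZbd (x i ω)).2
    have := abs_le.1 hmabs
    simp only [hYdef]
    linarith [h2, this.1]
  have hSint : Integrable (fun ω => Real.exp (t * (∑ i, Yf i) ω)) ℙ :=
    hYindep.integrable_exp_mul_sum hYm (fun i _ => hYint i)
  have chernoff := measure_ge_le_exp_mul_mgf ((n:ℝ) * s) ht hSint
  rw [hev]
  refine chernoff.trans ?_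
  -- bound the mgf
  have hmgf_sum : mgf (∑ i, Yf i) ℙ t = ∏ i, mgf (Yf i) ℙ t :=
    hYindep.mgf_sum hYm Finset.univ
  have hmgf_i : ∀ i : Fin n, mgf (Yf i) ℙ t ≤ Real.exp (t ^ 2 * C ^ 2 / 2) := by
    intro i
    have hmap : mgf (Yf i) ℙ t = mgf Z μ t := by
      rw [mgf, mgf, ← hlaw i]
      rw [integral_map (hxm i).aemeasurable]
      exact ((hZm.const_mul t).exp.aestronglyMeasurable)
    rw [hmap]
    have := hoeffding_mgf μ Z hZm hZbd hZmean t
    refine this.trans_eq ?_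
    congr 1
    ring
  have hprod : ∏ i, mgf (Yf i) ℙ t ≤ Real.exp ((n:ℝ) * (t ^ 2 * C ^ 2 / 2)) := by
    calc ∏ i : Fin n, mgf (Yf i) ℙ t ≤ ∏ _i : Fin n, Real.exp (t ^ 2 * C ^ 2 / 2) :=
          Finset.prod_le_prod (fun i _ => mgf_nonneg) (fun i _ => hmgf_i i)
      _ = Real.exp ((n:ℝ) * (t ^ 2 * C ^ 2 / 2)) := by
          rw [Finset.prod_const, ← Real.exp_nat_mul]
          simp
  calc Real.exp (-t * ((n:ℝ) * s)) * mgf (∑ i, Yf i) ℙ t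
      ≤ Real.exp (-t * ((n:ℝ) * s)) * Real.exp ((n:ℝ) * (t ^ 2 * C ^ 2 / 2)) := by
        apply mul_le_mul_of_nonneg_left _ (Real.exp_pos _).le
        rw [hmgf_sum]; exact hprod
    _ = Real.exp (-t * ((n:ℝ) * s) + (n:ℝ) * (t ^ 2 * C ^ 2 / 2)) := (Real.exp_add _ _).symm
    _ = Real.exp (-(n:ℝ) * s ^ 2 / (2 * C ^ 2)) := by
        congr 1
        rw [htdef]
        field_simp
        ring

set_option maxHeartbeats 1000000 in
/-- Theorem 1 of the paper (with the explicit constant from its proof): under the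
separation condition `(Q(x) - P(x))²/max{P(x)², Q(x)²} ≥ κ` and boundedness of the
log-likelihoods, the empirical MLE `α̂` is close to the population maximizer `α*`
with high probability. -/
theorem mle_estimation_error
    {X : Type*} [MeasurableSpace X] (μ : Measure X) [IsProbabilityMeasure μ]
    (P Q : X → ℝ) (hPm : Measurable P) (hQm : Measurable Q)
    (hP : ∀ x, 0 < P x) (hQ : ∀ x, 0 < Q x)
    (c : ℝ) (hc : 0 < c)
    (hbound : ∀ x, max |Real.log (P x)| |Real.log (Q x)| ≤ c)
    (κ : ℝ) (hκ : 0 < κ)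
    (hsep : ∀ x, (Q x - P x) ^ 2 / max (P x ^ 2) (Q x ^ 2) ≥ κ)
    {Ω : Type*} [MeasureSpace Ω] [IsProbabilityMeasure (ℙ : Measure Ω)]
    (n : ℕ) (hn : 0 < n) (x : Fin n → Ω → X)
    (hxm : ∀ i, Measurable (x i))
    (hindep : iIndepFun x ℙ)
    (hlaw : ∀ i, Measure.map (x i) ℙ = μ)
    (αstar : ℝ) (hαstar : αstar ∈ Set.Icc (0 : ℝ) 1)
    (hαstarMax : ∀ β ∈ Set.Icc (0 : ℝ) 1,
      (∫ y, Real.log ((1 - β) * P y + β * Q y) ∂μ) ≤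
        ∫ y, Real.log ((1 - αstar) * P y + αstar * Q y) ∂μ)
    (hstat : deriv (fun a : ℝ => ∫ y, Real.log ((1 - a) * P y + a * Q y) ∂μ) αstar = 0)
    (αhat : Ω → ℝ) (hαhat : ∀ ω, αhat ω ∈ Set.Icc (0 : ℝ) 1)
    (hαhatMax : ∀ ω, ∀ β ∈ Set.Icc (0 : ℝ) 1,
      (1 / (n : ℝ)) * ∑ i, Real.log ((1 - β) * P (x i ω) + β * Q (x i ω)) ≤
        (1 / (n : ℝ)) *
          ∑ i, Real.log ((1 - αhat ω) * P (x i ω) + αhat ω * Q (x i ω)))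
    (δ : ℝ) (hδ : δ ∈ Set.Ioo (0 : ℝ) 1) :
    (ℙ {ω : Ω |
        |αstar - αhat ω| ≤
          Real.sqrt (4 * Real.sqrt (2 * c ^ 2 * Real.log (2 / δ) / (n : ℝ)) / κ)}).toReal
      ≥ 1 - δ := by
  obtain ⟨hδ0, hδ1⟩ := hδ
  set ε : ℝ := Real.sqrt (2 * c ^ 2 * Real.log (2 / δ) / (n : ℝ)) with hεdef
  set r : ℝ := Real.sqrt (4 * ε / κ) with hrdef
  have hlog : 0 < Real.log (2 / δ) := Real.log_pos (by rw [lt_div_iff₀ hδ0]; linarith)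
  have hn' : (0:ℝ) < (n:ℝ) := Nat.cast_pos.2 hn
  have hεpos : 0 < ε := Real.sqrt_pos.2 (by positivity)
  have hrpos : 0 < r := Real.sqrt_pos.2 (by positivity)
  have hε2 : ε ^ 2 = 2 * c ^ 2 * Real.log (2 / δ) / (n : ℝ) :=
    Real.sq_sqrt (by positivity)
  have hr2 : r ^ 2 = 4 * ε / κ := Real.sq_sqrt (by positivity)
  rcases le_or_gt 1 r with hr1 | hr1
  · -- trivial case : radius at least 1
    have huniv : {ω : Ω | |αstar - αhat ω| ≤ r} = Set.univ := by
      apply Set.eq_univ_of_forall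
      intro ω
      simp only [Set.mem_setOf_eq]
      refine le_trans ?_ hr1
      rw [abs_le]
      have h1 := (hαhat ω).1
      have h2 := (hαhat ω).2
      exact ⟨by linarith [hαstar.1], by linarith [hαstar.2]⟩
    rw [huniv, measure_univ, ENNReal.toReal_one]
    linarith
  · set βp : ℝ := min (αstar + r) 1 with hβpdef
    set βm : ℝ := max (αstar - r) 0 with hβmdef
    have hβpIcc : βp ∈ Set.Icc (0:ℝ) 1 := by
      constructor
      · rw [le_min_iff]; exact ⟨by linarith [hαstar.1], by norm_num⟩
      · exact min_le_right _ _
    have hβmIcc : βm ∈ Set.Icc (0:ℝ) 1 := by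
      constructor
      · exact le_max_right _ _
      · rw [max_le_iff]; exact ⟨by linarith [hαstar.2], by norm_num⟩
    -- abbreviations
    set f : ℝ → X → ℝ := fun a y => Real.log ((1 - a) * P y + a * Q y) with hfdef
    have hbP : ∀ y, |Real.log (P y)| ≤ c := fun y => (le_max_left _ _).trans (hbound y)
    have hbQ : ∀ y, |Real.log (Q y)| ≤ c := fun y => (le_max_right _ _).trans (hbound y)
    have hfbd : ∀ a ∈ Set.Icc (0:ℝ) 1, ∀ y, |f a y| ≤ c := by
      intro a ha y
      exact mix_log_mem (hP y) (hQ y) (hbP y) (hbQ y) a ha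
    have hfm : ∀ a : ℝ, Measurable (fun y => f a y) := by
      intro a
      exact Real.measurable_log.comp ((hPm.const_mul (1 - a)).add (hQm.const_mul a))
    -- the two bad events
    set hplus : X → ℝ := fun y => f βp y - f αstar y with hplusdef
    set hminus : X → ℝ := fun y => f βm y - f αstar y with hminusdef
    set Aplus : Set Ω :=
      {ω | (n:ℝ) * (∫ y, hplus y ∂μ) + (n:ℝ) * (2 * ε) ≤ ∑ i, hplus (x i ω)} with hApdef
    set Aminus : Set Ω :=
      {ω | (n:ℝ) * (∫ y, hminus y ∂μ) + (n:ℝ) * (2 * ε) ≤ ∑ i, hminus (x i ω)} with hAmdef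
    have hplusm : Measurable hplus := (hfm βp).sub (hfm αstar)
    have hminusm : Measurable hminus := (hfm βm).sub (hfm αstar)
    have hplusbd : ∀ y, |hplus y| ≤ 2 * c := by
      intro y
      have h1 := abs_le.1 (hfbd βp hβpIcc y)
      have h2 := abs_le.1 (hfbd αstar hαstar y)
      rw [abs_le]
      exact ⟨by simp only [hplusdef]; linarith, by simp only [hplusdef]; linarith⟩
    have hminusbd : ∀ y, |hminus y| ≤ 2 * c := by
      intro y
      have h1 := abs_le.1 (hfbd βm hβmIcc y)
      have h2 := abs_le.1 (hfbd αstar hαstar y)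
      rw [abs_le]
      exact ⟨by simp only [hminusdef]; linarith, by simp only [hminusdef]; linarith⟩
    -- tail bounds
    have htailp := hoeff_tail μ n x hxm hindep hlaw hplus hplusm (2 * c) (by linarith)
      hplusbd (2 * ε) (by linarith)
    have htailm := hoeff_tail μ n x hxm hindep hlaw hminus hminusm (2 * c) (by linarith)
      hminusbd (2 * ε) (by linarith)
    have hexp : Real.exp (-(n:ℝ) * (2 * ε) ^ 2 / (2 * (2 * c) ^ 2)) = δ / 2 := by
      have harg : -(n:ℝ) * (2 * ε) ^ 2 / (2 * (2 * c) ^ 2) = -Real.log (2 / δ) := by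
        rw [show ((2 * ε) ^ 2 = 4 * ε ^ 2) from by ring, hε2]
        field_simp
        ring
      rw [harg, Real.exp_neg, Real.exp_log (by positivity), inv_div]
    rw [hexp] at htailp htailm
    have hAple : ℙ Aplus ≤ ENNReal.ofReal (δ / 2) := by
      rw [← ENNReal.ofReal_toReal (measure_ne_top ℙ Aplus)]
      exact ENNReal.ofReal_le_ofReal htailp
    have hAmle : ℙ Aminus ≤ ENNReal.ofReal (δ / 2) := by
      rw [← ENNReal.ofReal_toReal (measure_ne_top ℙ Aminus)]
      exact ENNReal.ofReal_le_ofReal htailm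
    -- measurability of events
    have hsumm : ∀ (h : X → ℝ), Measurable h → Measurable (fun ω => ∑ i, h (x i ω)) := by
      intro h hm
      exact Finset.measurable_sum Finset.univ (fun i _ => hm.comp (hxm i))
    have hApmeas : MeasurableSet Aplus :=
      measurableSet_le measurable_const (hsumm hplus hplusm)
    have hAmmeas : MeasurableSet Aminus :=
      measurableSet_le measurable_const (hsumm hminus hminusm)
    -- strong concavity facts
    have hSCp := strong_concavity μ P Q hPm hQm hP hQ c hc hbound κ hκ hsep hαstar hstat hβpIcc
    have hSCm := strong_concavity μ P Q hPm hQm hP hQ c hc hbound κ hκ hsep hαstar hstat hβmIcc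
    have hintp : ∫ y, hplus y ∂μ =
        (∫ y, f βp y ∂μ) - ∫ y, f αstar y ∂μ :=
      integral_sub (f_integrable μ P Q hPm hQm hP hQ c hbound βp hβpIcc)
        (f_integrable μ P Q hPm hQm hP hQ c hbound αstar hαstar)
    have hintm : ∫ y, hminus y ∂μ =
        (∫ y, f βm y ∂μ) - ∫ y, f αstar y ∂μ :=
      integral_sub (f_integrable μ P Q hPm hQm hP hQ c hbound βm hβmIcc)
        (f_integrable μ P Q hPm hQm hP hQ c hbound αstar hαstar)
    -- key concavity step for the empirical sums
    have key : ∀ (ω : Ω) (β : ℝ), β ∈ Set.Icc (0:ℝ) 1 →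
        (∃ θ : ℝ, 0 ≤ θ ∧ θ ≤ 1 ∧ β = (1 - θ) * αstar + θ * αhat ω) →
        ∑ i, f αstar (x i ω) ≤ ∑ i, f β (x i ω) := by
      intro ω β hβ ⟨θ, hθ0, hθ1, hβeq⟩
      have hmax : ∑ i, f αstar (x i ω) ≤ ∑ i, f (αhat ω) (x i ω) := by
        have := hαhatMax ω αstar hαstar
        have hpos : (0:ℝ) < 1 / (n:ℝ) := by positivity
        exact le_of_mul_le_mul_left this hpos
      have hconc : ∀ i : Fin n,
          (1 - θ) * f αstar (x i ω) + θ * f (αhat ω) (x i ω) ≤ f β (x i ω) := by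
        intro i
        have := mix_concave (hP (x i ω)) (hQ (x i ω)) hαstar (hαhat ω)
          (by linarith : (0:ℝ) ≤ 1 - θ) hθ0 (by ring)
        rw [← hβeq] at this
        exact this
      have hsum := Finset.sum_le_sum (fun i (_ : i ∈ Finset.univ) => hconc i)
      rw [Finset.sum_add_distrib, ← Finset.mul_sum, ← Finset.mul_sum] at hsum
      nlinarith [hsum, hmax]
    -- the complement of the bad events is inside the good event
    have hsubset : (Aplus ∪ Aminus)ᶜ ⊆ {ω : Ω | |αstar - αhat ω| ≤ r} := by
      intro ω hω
      simp only [Set.mem_compl_iff, Set.mem_union, not_or] at hω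
      obtain ⟨hωp, hωm⟩ := hω
      simp only [Set.mem_setOf_eq]
      by_contra hcon
      push_neg at hcon
      rcases le_or_gt (αhat ω) αstar with hside | hside
      · -- lower side : use Aminus
        have habs : |αstar - αhat ω| = αstar - αhat ω := abs_of_nonneg (by linarith)
        rw [habs] at hcon
        have hβmeq : βm = αstar - r := by
          rw [hβmdef, max_eq_left]
          linarith [(hαhat ω).1]
        have hmean : ∫ y, hminus y ∂μ ≤ -(2 * ε) := by
          rw [hintm]
          have : κ / 2 * (βm - αstar) ^ 2 = 2 * ε := by
            rw [hβmeq, show (αstar - r - αstar) = -r from by ring]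
            rw [show (-r) ^ 2 = r ^ 2 from by ring, hr2]
            field_simp
            ring
          linarith [hSCp, hSCm, this ▸ hSCm]
        have hge : (0:ℝ) ≤ ∑ i, hminus (x i ω) := by
          have : ∑ i, f αstar (x i ω) ≤ ∑ i, f βm (x i ω) := by
            apply key ω βm hβmIcc
            refine ⟨r / (αstar - αhat ω), div_nonneg hrpos.le (by linarith), ?_, ?_⟩
            · rw [div_le_one (by linarith)]; linarith
            · have hne : αstar - αhat ω ≠ 0 := ne_of_gt (by linarith)
              rw [hβmeq]
              field_simp
              ring
          simp only [hminusdef]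
          rw [Finset.sum_sub_distrib]
          linarith
        apply hωm
        simp only [hAmdef, Set.mem_setOf_eq]
        have : (n:ℝ) * (∫ y, hminus y ∂μ) + (n:ℝ) * (2 * ε) ≤ 0 := by
          have := mul_le_mul_of_nonneg_left hmean hn'.le
          nlinarith
        linarith [hge]
      · -- upper side : use Aplus
        have habs : |αstar - αhat ω| = αhat ω - αstar := by
          rw [abs_of_nonpos (by linarith)]; ring
        rw [habs] at hcon
        have hβpeq : βp = αstar + r := by
          rw [hβpdef, min_eq_left]
          linarith [(hαhat ω).2]
        have hmean : ∫ y, hplus y ∂μ ≤ -(2 * ε) := by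
          rw [hintp]
          have : κ / 2 * (βp - αstar) ^ 2 = 2 * ε := by
            rw [hβpeq, show (αstar + r - αstar) = r from by ring, hr2]
            field_simp
            ring
          linarith [this ▸ hSCp]
        have hge : (0:ℝ) ≤ ∑ i, hplus (x i ω) := by
          have : ∑ i, f αstar (x i ω) ≤ ∑ i, f βp (x i ω) := by
            apply key ω βp hβpIcc
            refine ⟨r / (αhat ω - αstar), div_nonneg hrpos.le (by linarith), ?_, ?_⟩
            · rw [div_le_one (by linarith)]; linarith
            · have hne : αhat ω - αstar ≠ 0 := ne_of_gt (by linarith)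
              rw [hβpeq]
              field_simp
              ring
          simp only [hplusdef]
          rw [Finset.sum_sub_distrib]
          linarith
        apply hωp
        simp only [hApdef, Set.mem_setOf_eq]
        have : (n:ℝ) * (∫ y, hplus y ∂μ) + (n:ℝ) * (2 * ε) ≤ 0 := by
          have := mul_le_mul_of_nonneg_left hmean hn'.le
          nlinarith
        linarith [hge]
    -- conclude
    have hunionle : ℙ (Aplus ∪ Aminus) ≤ ENNReal.ofReal δ := by
      calc ℙ (Aplus ∪ Aminus) ≤ ℙ Aplus + ℙ Aminus := measure_union_le _ _
        _ ≤ ENNReal.ofReal (δ / 2) + ENNReal.ofReal (δ / 2) := add_le_add hAple hAmle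
        _ = ENNReal.ofReal δ := by
            rw [← ENNReal.ofReal_add (by linarith) (by linarith)]
            norm_num
    have hcompl : (1 : ℝ≥0∞) - ENNReal.ofReal δ ≤ ℙ ((Aplus ∪ Aminus)ᶜ) := by
      rw [prob_compl_eq_one_sub (hApmeas.union hAmmeas)]
      exact tsub_le_tsub_left hunionle 1
    have hfinal : (1 : ℝ≥0∞) - ENNReal.ofReal δ ≤ ℙ {ω : Ω | |αstar - αhat ω| ≤ r} :=
      le_trans hcompl (measure_mono hsubset)
    have h1 : ((1 : ℝ≥0∞) - ENNReal.ofReal δ).toReal = 1 - δ := by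
      rw [← ENNReal.ofReal_one, ← ENNReal.ofReal_sub _ (le_of_lt hδ0)]
      exact ENNReal.toReal_ofReal (by linarith)
    calc (1:ℝ) - δ = ((1 : ℝ≥0∞) - ENNReal.ofReal δ).toReal := h1.symm
      _ ≤ (ℙ {ω : Ω | |αstar - αhat ω| ≤ r}).toReal := by
          apply ENNReal.toReal_mono (measure_ne_top _ _) hfinal
end
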